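/- arXiv:2007.00123 — 5 statements merged into one kernel-verified Lean document; each statement's English description precedes it below -/
import Mathlib

section
/- Let d be a proper divisor of m. Then there exists a positive integer n such that m divides n⁴ − 1, gcd(n² − 1, m) = d, and gcd(n − 1, m) = d, if and only if ν₂(d) = ν₂(m), ν_ℓ(d) = ν_ℓ(m) for every prime ℓ with ℓ ≡ 3 (mod 4), and gcd(d, m/d) = 1. -/
private lemma lift_step (p : ℕ) (hp : p.Prime) (hodd : p ≠ 2) (k : ℕ) (hk : 1 ≤ k)
    (x : ℤ) (hx : (p : ℤ) ^ k ∣ x ^ 2 + 1) : ∃ y : ℤ, (p : ℤ) ^ (k + 1) ∣ y ^ 2 + 1 := by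
  haveI : Fact p.Prime := ⟨hp⟩
  obtain ⟨c, hc⟩ := hx
  have hp1 : 1 < p := hp.one_lt
  have hpx : ¬ (p : ℤ) ∣ x := by
    intro h
    have h1 : (p : ℤ) ∣ x ^ 2 + 1 := dvd_trans (dvd_pow_self _ (by omega : k ≠ 0)) ⟨c, hc⟩
    have h2 : (p : ℤ) ∣ x ^ 2 := h.pow (by norm_num)
    have h3 : (p : ℤ) ∣ 1 := by simpa using dvd_sub h1 h2
    have := Int.le_of_dvd one_pos h3
    omega
  -- choose t with p ∣ c + 2*x*t
  set X : ZMod p := ((x : ℤ) : ZMod p) with hX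
  set C : ZMod p := ((c : ℤ) : ZMod p) with hC
  have hu : (2 * X : ZMod p) ≠ 0 := by
    apply mul_ne_zero
    · have : (2 : ZMod p) = ((2 : ℕ) : ZMod p) := by norm_cast
      rw [this, Ne, ZMod.natCast_eq_zero_iff]
      exact fun h => hodd (((Nat.prime_dvd_prime_iff_eq hp Nat.prime_two).mp h))
    · rw [hX, Ne, ZMod.intCast_zmod_eq_zero_iff_dvd]
      exact hpx
  set tbar : ZMod p := -C * (2 * X)⁻¹ with htbar
  obtain ⟨t, ht⟩ : ∃ t : ℤ, ((t : ℤ) : ZMod p) = tbar := ⟨(tbar.val : ℤ), by simp⟩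
  have key : (p : ℤ) ∣ c + 2 * x * t := by
    rw [← ZMod.intCast_zmod_eq_zero_iff_dvd]
    push_cast
    rw [ht, ← hX, ← hC, htbar]
    have hX0 : X ≠ 0 := right_ne_zero_of_mul hu
    have h20 : (2 : ZMod p) ≠ 0 := left_ne_zero_of_mul hu
    field_simp
    ring
  obtain ⟨s, hs⟩ := key
  refine ⟨x + t * (p : ℤ) ^ k, s + t ^ 2 * (p : ℤ) ^ (k - 1), ?_⟩
  have hkk : (p : ℤ) ^ k * (p : ℤ) ^ k = (p : ℤ) ^ (k + 1) * (p : ℤ) ^ (k - 1) := by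
    rw [← pow_add, ← pow_add]; congr 1; omega
  have hps : (p:ℤ) ^ (k+1) = (p:ℤ)^k * p := by rw [pow_succ]
  linear_combination hc + (p : ℤ) ^ k * hs + t ^ 2 * hkk + (s + t^2 * (p:ℤ)^(k-1)) * hps

private lemma neg_one_sq_mod_prime_pow (p : ℕ) (hp : p.Prime) (hp4 : p % 4 = 1) :
    ∀ k : ℕ, ∃ x : ℤ, (p : ℤ) ^ k ∣ x ^ 2 + 1 := by
  haveI : Fact p.Prime := ⟨hp⟩
  have hodd : p ≠ 2 := by omega
  intro k
  induction k with
  | zero => exact ⟨0, by simp⟩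
  | succ k ih =>
    rcases Nat.eq_zero_or_pos k with rfl | hk
    · -- base: k+1 = 1
      obtain ⟨b, hb⟩ : IsSquare (-1 : ZMod p) :=
        ZMod.exists_sq_eq_neg_one_iff.mpr (by omega)
      refine ⟨(b.val : ℤ), ?_⟩
      rw [pow_one, ← ZMod.intCast_zmod_eq_zero_iff_dvd]
      push_cast
      rw [ZMod.natCast_val, ZMod.cast_id]
      rw [show (b : ZMod p) ^ 2 = b * b by ring, ← hb]
      ring
    · obtain ⟨x, hx⟩ := ih
      exact lift_step p hp hodd k hk x hx

private lemma exists_sq_add_one_dvd :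
    ∀ e : ℕ, 0 < e → (∀ p, p.Prime → p ∣ e → p % 4 = 1) → ∃ x : ℕ, e ∣ x ^ 2 + 1 := by
  intro e
  induction e using Nat.recOnPosPrimePosCoprime with
  | prime_pow p n hp hn =>
    intro _ h
    obtain ⟨x, hx⟩ := neg_one_sq_mod_prime_pow p hp
      (h p hp (dvd_pow_self p hn.ne')) n
    refine ⟨x.natAbs, ?_⟩
    have h2 : ((x.natAbs : ℤ)) ^ 2 = x ^ 2 := by
      rw [sq, sq, Int.natAbs_mul_self']
    have h3 : ((p ^ n : ℕ) : ℤ) ∣ ((x.natAbs ^ 2 + 1 : ℕ) : ℤ) := by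
      push_cast
      rw [sq_abs]
      exact_mod_cast hx
    exact_mod_cast h3
  | zero => intro h; omega
  | one => intro _ _; exact ⟨0, by simp⟩
  | coprime a b ha hb hab iha ihb =>
    intro hpos h
    obtain ⟨x, hx⟩ := iha (by omega) (fun p pp hd => h p pp (hd.mul_right b))
    obtain ⟨y, hy⟩ := ihb (by omega) (fun p pp hd => h p pp (hd.mul_left a))
    obtain ⟨k, hk1, hk2⟩ := Nat.chineseRemainder hab x y
    refine ⟨k, Nat.Coprime.mul_dvd_of_dvd_of_dvd hab ?_ ?_⟩
    · have h1 : k ^ 2 + 1 ≡ x ^ 2 + 1 [MOD a] := (hk1.pow 2).add_right 1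
      have h2 : x ^ 2 + 1 ≡ 0 [MOD a] := (Nat.modEq_zero_iff_dvd).mpr hx
      exact (Nat.modEq_zero_iff_dvd).mp (h1.trans h2)
    · have h1 : k ^ 2 + 1 ≡ y ^ 2 + 1 [MOD b] := (hk2.pow 2).add_right 1
      have h2 : y ^ 2 + 1 ≡ 0 [MOD b] := (Nat.modEq_zero_iff_dvd).mpr hy
      exact (Nat.modEq_zero_iff_dvd).mp (h1.trans h2)



private lemma sq_factor (n : ℕ) (hn : 1 ≤ n) : n ^ 2 - 1 = (n - 1) * (n + 1) := by
  cases n with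
  | zero => omega
  | succ k =>
    have h : (k + 1) ^ 2 = k * (k + 2) + 1 := by ring
    have h2 : (k + 1 - 1) * (k + 1 + 1) = k * (k + 2) := by simp
    omega

private lemma quartic_factor (n : ℕ) (hn : 1 ≤ n) :
    n ^ 4 - 1 = (n ^ 2 - 1) * (n ^ 2 + 1) := by
  have h1 : 1 ≤ n ^ 2 := Nat.one_le_pow _ _ hn
  have h : (n ^ 2 - 1) * (n ^ 2 + 1) + 1 = n ^ 4 := by
    obtain ⟨B, hB⟩ : ∃ B, n ^ 2 = B + 1 := ⟨n ^ 2 - 1, by omega⟩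
    have h4 : n ^ 4 = (n ^ 2) ^ 2 := by ring
    rw [h4, hB]
    have : B * (B + 2) + 1 = (B + 1) ^ 2 := by ring
    simpa using this
  omega

private lemma quartic_factor' (n : ℕ) (hn : 1 ≤ n) :
    n ^ 4 - 1 = (n - 1) * ((n + 1) * (n ^ 2 + 1)) := by
  rw [quartic_factor n hn, sq_factor n hn]; ring

section Forward
variable {n m d : ℕ}

-- P1
private lemma odd_prime_dvd (hn : 2 ≤ n) (hm0 : m ≠ 0) (hm4 : m ∣ n ^ 4 - 1)
    {ℓ : ℕ} (hl : ℓ.Prime) (hl2 : ℓ ≠ 2) (hln : ℓ ∣ n - 1) :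
    ℓ ^ (m.factorization ℓ) ∣ n - 1 := by
  have h1n : 1 ≤ n := by omega
  have hdvd : ℓ ^ (m.factorization ℓ) ∣ (n - 1) * ((n + 1) * (n ^ 2 + 1)) := by
    rw [← quartic_factor' n h1n]
    exact (Nat.ordProj_dvd m ℓ).trans hm4
  have hlp1 : ¬ ℓ ∣ n + 1 := by
    intro h
    have : ℓ ∣ 2 := by
      have := Nat.dvd_sub h hln
      simpa [show n + 1 - (n - 1) = 2 by omega] using this
    exact hl2 ((Nat.prime_dvd_prime_iff_eq hl Nat.prime_two).mp this)
  have hlsq : ¬ ℓ ∣ n ^ 2 + 1 := by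
    intro h
    have hd2 : ℓ ∣ n ^ 2 - 1 := by
      rw [sq_factor n h1n]; exact hln.mul_right _
    have h2 : ℓ ∣ 2 := by
      have := Nat.dvd_sub h hd2
      have hsq : 1 ≤ n ^ 2 := Nat.one_le_pow _ _ h1n
      simpa [show n ^ 2 + 1 - (n ^ 2 - 1) = 2 by omega] using this
    exact hl2 ((Nat.prime_dvd_prime_iff_eq hl Nat.prime_two).mp h2)
  have hcop : Nat.Coprime (ℓ ^ m.factorization ℓ) ((n + 1) * (n ^ 2 + 1)) :=
    Nat.Coprime.pow_left _ (Nat.Coprime.mul_right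
      ((hl.coprime_iff_not_dvd).mpr hlp1) ((hl.coprime_iff_not_dvd).mpr hlsq))
  exact hcop.dvd_of_dvd_mul_right hdvd

-- P2
private lemma two_pow_dvd (hn : 2 ≤ n) (hm0 : m ≠ 0) (h2m : 2 ∣ m)
    (hm4 : m ∣ n ^ 4 - 1) (hd1 : Nat.gcd (n ^ 2 - 1) m = d) (hd2 : Nat.gcd (n - 1) m = d) :
    2 ^ (m.factorization 2) ∣ n - 1 := by
  have h1n : 1 ≤ n := by omega
  have hn4 : 16 ≤ n ^ 4 := by
    calc (16 : ℕ) = 2 ^ 4 := by norm_num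
    _ ≤ n ^ 4 := Nat.pow_le_pow_left hn 4
  have hnodd : n % 2 = 1 := by
    rcases Nat.even_or_odd n with he | ho
    · exfalso
      have h2n4 : 2 ∣ n ^ 4 := Dvd.dvd.pow he.two_dvd (by norm_num)
      have h2m4 : 2 ∣ n ^ 4 - 1 := h2m.trans hm4
      omega
    · exact Nat.odd_iff.mp ho
  by_contra hcon
  set a := m.factorization 2 with ha
  set v := (n - 1).factorization 2 with hv
  have hn1 : n - 1 ≠ 0 := by omega
  have hva : v < a := by
    by_contra hva
    exact hcon ((pow_dvd_pow 2 (by omega : a ≤ v)).trans (Nat.ordProj_dvd _ 2))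
  have hdv1 : 2 ^ (v + 1) ∣ n ^ 2 - 1 := by
    rw [sq_factor n h1n, pow_succ]
    exact mul_dvd_mul (Nat.ordProj_dvd _ 2) (by omega : 2 ∣ n + 1)
  have hdvm : 2 ^ (v + 1) ∣ m := (pow_dvd_pow 2 (by omega : v + 1 ≤ a)).trans (Nat.ordProj_dvd _ 2)
  have hdvd : 2 ^ (v + 1) ∣ d := hd1 ▸ Nat.dvd_gcd hdv1 hdvm
  have hdn1 : d ∣ n - 1 := hd2 ▸ Nat.gcd_dvd_left _ _
  have : v + 1 ≤ v := by
    have := (Nat.Prime.pow_dvd_iff_le_factorization Nat.prime_two hn1).mp (hdvd.trans hdn1)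
    omega
  omega

-- P3
private lemma mod_four_three_dvd (hn : 2 ≤ n) (hm4 : m ∣ n ^ 4 - 1)
    (hd1 : Nat.gcd (n ^ 2 - 1) m = d) (hd2 : Nat.gcd (n - 1) m = d)
    {ℓ : ℕ} (hl : ℓ.Prime) (hl4 : ℓ % 4 = 3) (hlm : ℓ ∣ m) : ℓ ∣ n - 1 := by
  haveI : Fact ℓ.Prime := ⟨hl⟩
  have h1n4 : 1 ≤ n ^ 4 := Nat.one_le_pow _ _ (by omega)
  have h1n2 : 1 ≤ n ^ 2 := Nat.one_le_pow _ _ (by omega)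
  have hl4' : ℓ ∣ n ^ 4 - 1 := hlm.trans hm4
  have hX4 : ((n : ZMod ℓ)) ^ 4 = 1 := by
    have h0 : ((n ^ 4 - 1 : ℕ) : ZMod ℓ) = 0 := (ZMod.natCast_eq_zero_iff _ _).mpr hl4'
    rw [Nat.cast_sub h1n4] at h0
    push_cast at h0
    linear_combination h0
  have hsq : (n : ZMod ℓ) ^ 2 = 1 ∨ (n : ZMod ℓ) ^ 2 = -1 := by
    have : ((n : ZMod ℓ) ^ 2) * ((n : ZMod ℓ) ^ 2) = 1 := by
      rw [← pow_add]; exact hX4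
    exact mul_self_eq_one_iff.mp this
  have hX2 : (n : ZMod ℓ) ^ 2 = 1 := by
    rcases hsq with h | h
    · exact h
    · exfalso
      have : IsSquare (-1 : ZMod ℓ) := ⟨(n : ZMod ℓ), by rw [← h]; ring⟩
      exact (ZMod.exists_sq_eq_neg_one_iff.mp this) hl4
  have hln2 : ℓ ∣ n ^ 2 - 1 := by
    rw [← ZMod.natCast_eq_zero_iff, Nat.cast_sub h1n2]
    push_cast
    rw [hX2]; ring
  have : ℓ ∣ d := hd1 ▸ Nat.dvd_gcd hln2 hlm
  exact this.trans (hd2 ▸ Nat.gcd_dvd_left _ _)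

end Forward

private lemma forward_dir (m d : ℕ) (hm0 : m ≠ 0) (h2m : 2 ∣ m) (hdm : d ∣ m) (hdne : d ≠ m)
    (h : ∃ n : ℕ, 0 < n ∧ m ∣ n ^ 4 - 1 ∧ Nat.gcd (n ^ 2 - 1) m = d ∧ Nat.gcd (n - 1) m = d) :
    padicValNat 2 d = padicValNat 2 m ∧
      (∀ ℓ : ℕ, ℓ.Prime → ℓ % 4 = 3 → padicValNat ℓ d = padicValNat ℓ m) ∧
      Nat.gcd d (m / d) = 1 := by
  obtain ⟨n, hn0, hm4, hd1, hd2⟩ := h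
  have hd0 : d ≠ 0 := by
    intro h; subst h; exact hm0 (Nat.eq_zero_of_zero_dvd hdm)
  have hn2 : 2 ≤ n := by
    rcases n with _ | _ | n
    · omega
    · exfalso; simp at hd2; exact hdne hd2.symm
    · omega
  have hkey : ∀ ℓ : ℕ, ℓ.Prime → (ℓ = 2 ∨ ℓ ∣ n - 1) → ℓ ^ (m.factorization ℓ) ∣ d := by
    intro ℓ hl hcase
    rcases hcase with rfl | hln
    · exact hd1 ▸ Nat.dvd_gcd
        (by
          have h2' := two_pow_dvd hn2 hm0 h2m hm4 hd1 hd2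
          have : (n - 1) ∣ n ^ 2 - 1 := ⟨n + 1, sq_factor n (by omega)⟩
          exact h2'.trans this)
        (Nat.ordProj_dvd m 2)
    · by_cases hl2 : ℓ = 2
      · subst hl2
        exact hd1 ▸ Nat.dvd_gcd
          (by
            have h2' := two_pow_dvd hn2 hm0 h2m hm4 hd1 hd2
            exact h2'.trans ⟨n + 1, sq_factor n (by omega)⟩)
          (Nat.ordProj_dvd m 2)
      · exact hd2 ▸ Nat.dvd_gcd (odd_prime_dvd hn2 hm0 hm4 hl hl2 hln)
          (Nat.ordProj_dvd m ℓ)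
  have val_eq : ∀ ℓ : ℕ, ℓ.Prime → ℓ ^ (m.factorization ℓ) ∣ d →
      padicValNat ℓ d = padicValNat ℓ m := by
    intro ℓ hl hpow
    rw [← Nat.factorization_def d hl, ← Nat.factorization_def m hl]
    refine le_antisymm ?_ ?_
    · exact (Nat.factorization_le_iff_dvd hd0 hm0).mpr hdm ℓ
    · exact (Nat.Prime.pow_dvd_iff_le_factorization hl hd0).mp hpow
  refine ⟨val_eq 2 Nat.prime_two (hkey 2 Nat.prime_two (Or.inl rfl)), ?_, ?_⟩
  · intro ℓ hl hl4
    by_cases hlm : ℓ ∣ m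
    · have hln : ℓ ∣ n - 1 := mod_four_three_dvd hn2 hm4 hd1 hd2 hl hl4 hlm
      exact val_eq ℓ hl (hkey ℓ hl (Or.inr hln))
    · rw [← Nat.factorization_def d hl, ← Nat.factorization_def m hl]
      rw [Nat.factorization_eq_zero_of_not_dvd hlm,
        Nat.factorization_eq_zero_of_not_dvd (fun h => hlm (h.trans hdm))]
  · by_contra hg
    obtain ⟨ℓ, hl, hld⟩ := Nat.exists_prime_and_dvd hg
    have hl1 : ℓ ∣ d := hld.trans (Nat.gcd_dvd_left _ _)
    have hl2 : ℓ ∣ m / d := hld.trans (Nat.gcd_dvd_right _ _)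
    have hpow : ℓ ^ (m.factorization ℓ) ∣ d := by
      by_cases hcase : ℓ = 2
      · exact hkey ℓ hl (Or.inl hcase)
      · exact hkey ℓ hl (Or.inr (hl1.trans (hd2 ▸ Nat.gcd_dvd_left _ _)))
    have hm' : d * (m / d) = m := Nat.mul_div_cancel' hdm
    obtain ⟨c, hc⟩ := hl2
    have hldm : d * ℓ ∣ m := ⟨c, by rw [← hm', hc]; ring⟩
    have hpow1 : ℓ ^ (m.factorization ℓ + 1) ∣ m := by
      rw [pow_succ]
      exact (mul_dvd_mul hpow dvd_rfl).trans hldm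
    have := (Nat.Prime.pow_dvd_iff_le_factorization hl hm0).mp hpow1
    omega

private lemma reverse_dir (m d : ℕ) (hm0 : m ≠ 0) (hdm : d ∣ m) (hdne : d ≠ m)
    (h1 : padicValNat 2 d = padicValNat 2 m)
    (h2 : ∀ ℓ : ℕ, ℓ.Prime → ℓ % 4 = 3 → padicValNat ℓ d = padicValNat ℓ m)
    (h3 : Nat.gcd d (m / d) = 1) :
    ∃ n : ℕ, 0 < n ∧ m ∣ n ^ 4 - 1 ∧ Nat.gcd (n ^ 2 - 1) m = d ∧ Nat.gcd (n - 1) m = d := by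
  set e := m / d with he
  clear_value e
  have hde : d * e = m := by rw [he]; exact Nat.mul_div_cancel' hdm
  have hd0 : d ≠ 0 := by
    intro h; subst h; exact hm0 (Nat.eq_zero_of_zero_dvd hdm)
  have he0 : e ≠ 0 := by intro h; rw [h, mul_zero] at hde; exact hm0 hde.symm
  have he1 : e ≠ 1 := by intro h; rw [h, mul_one] at hde; exact hdne hde
  have hprimes : ∀ p, p.Prime → p ∣ e → p % 4 = 1 := by
    intro p pp hpe
    have hfm : m.factorization p = d.factorization p + e.factorization p := by
      rw [← hde, Nat.factorization_mul hd0 he0]; simp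
    have hfe : 0 < e.factorization p := pp.factorization_pos_of_dvd he0 hpe
    have hp2 : p ≠ 2 := by
      intro h; subst h
      rw [← Nat.factorization_def d Nat.prime_two, ← Nat.factorization_def m Nat.prime_two] at h1
      rw [hfm] at h1
      simp only [left_eq_add] at h1
      exact absurd h1 hfe.ne'
    have hoddp : p % 2 = 1 := Nat.odd_iff.mp (pp.odd_of_ne_two hp2)
    have hp3 : p % 4 ≠ 3 := by
      intro h
      have hval := h2 p pp h
      rw [← Nat.factorization_def d pp, ← Nat.factorization_def m pp] at hval
      rw [hfm] at hval
      simp only [left_eq_add] at hval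
      exact absurd hval hfe.ne'
    omega
  obtain ⟨x, hx⟩ := exists_sq_add_one_dvd e (Nat.pos_of_ne_zero he0) hprimes
  have hcop : Nat.Coprime d e := h3
  obtain ⟨n, hn1, hn2⟩ := Nat.chineseRemainder hcop 1 x
  have hn0 : 0 < n := by
    rcases Nat.eq_zero_or_pos n with rfl | h
    · exfalso
      have hex : e ∣ x := (Nat.modEq_zero_iff_dvd).mp hn2.symm
      have hex2 : e ∣ x ^ 2 := hex.pow (by norm_num)
      have he1' : e ∣ 1 := by
        have := Nat.dvd_sub hx hex2
        simpa using this
      have := Nat.le_of_dvd one_pos he1'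
      omega
    · exact h
  have h1n : 1 ≤ n := hn0
  have hdn1 : d ∣ n - 1 := (Nat.modEq_iff_dvd' h1n).mp hn1.symm
  have hen2 : e ∣ n ^ 2 + 1 := by
    have ha : n ^ 2 + 1 ≡ x ^ 2 + 1 [MOD e] := (hn2.pow 2).add_right 1
    exact (Nat.modEq_zero_iff_dvd).mp (ha.trans ((Nat.modEq_zero_iff_dvd).mpr hx))
  have heodd : ¬ 2 ∣ e := by
    intro h; have := hprimes 2 Nat.prime_two h; omega
  have hn1sq : (n - 1) ∣ n ^ 2 - 1 := ⟨n + 1, sq_factor n h1n⟩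
  have hn1d4 : (n - 1) ∣ n ^ 4 - 1 := ⟨_, quartic_factor' n h1n⟩
  have hen4 : e ∣ n ^ 4 - 1 := by
    rw [quartic_factor n h1n]
    exact Dvd.dvd.mul_left hen2 _
  have hm4 : m ∣ n ^ 4 - 1 := by
    rw [← hde]
    exact hcop.mul_dvd_of_dvd_of_dvd (hdn1.trans hn1d4) hen4
  have hcop2 : Nat.Coprime (n ^ 2 - 1) e := by
    by_contra hg
    obtain ⟨ℓ, hl, hld⟩ := Nat.exists_prime_and_dvd hg
    have hl1 : ℓ ∣ n ^ 2 - 1 := hld.trans (Nat.gcd_dvd_left _ _)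
    have hl2 : ℓ ∣ e := hld.trans (Nat.gcd_dvd_right _ _)
    have hl3 : ℓ ∣ n ^ 2 + 1 := hl2.trans hen2
    have h1n2 : 1 ≤ n ^ 2 := Nat.one_le_pow _ _ h1n
    have hl4 : ℓ ∣ 2 := by
      have := Nat.dvd_sub hl3 hl1
      simpa [show n ^ 2 + 1 - (n ^ 2 - 1) = 2 by omega] using this
    have : ℓ = 2 := (Nat.prime_dvd_prime_iff_eq hl Nat.prime_two).mp hl4
    subst this; exact heodd hl2
  have hcop1 : Nat.Coprime (n - 1) e := Nat.Coprime.coprime_dvd_left hn1sq hcop2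
  have hg1 : Nat.gcd (n - 1) m = d := by
    rw [← hde, Nat.Coprime.gcd_mul_right_cancel_right d hcop1.symm, Nat.gcd_comm]
    exact Nat.gcd_eq_left hdn1
  have hg2 : Nat.gcd (n ^ 2 - 1) m = d := by
    rw [← hde, Nat.Coprime.gcd_mul_right_cancel_right d hcop2.symm, Nat.gcd_comm]
    exact Nat.gcd_eq_left (hdn1.trans hn1sq)
  exact ⟨n, hn0, hm4, hg2, hg1⟩


/-- Proposition 3.12: characterization of (q, χ, 4)-admissible integers. -/
theorem stmt_14 (q : ℕ) (hq : ∃ p' j : ℕ, p'.Prime ∧ Odd p' ∧ 0 < j ∧ q = p' ^ j)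
    (χ : ℤ) (hχ : χ = 1 ∨ χ = -1) (m : ℕ) (hm : (m : ℤ) = (q : ℤ) - χ)
    (d : ℕ) (hdm : d ∣ m) (hdne : d ≠ m) :
    (∃ n : ℕ, 0 < n ∧ m ∣ n ^ 4 - 1 ∧ Nat.gcd (n ^ 2 - 1) m = d ∧
        Nat.gcd (n - 1) m = d) ↔
      (padicValNat 2 d = padicValNat 2 m ∧
        (∀ ℓ : ℕ, ℓ.Prime → ℓ % 4 = 3 → padicValNat ℓ d = padicValNat ℓ m) ∧
        Nat.gcd d (m / d) = 1) := by
  obtain ⟨p', j, hp', hoddp', hj, rfl⟩ := hq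
  have hp2 : 2 ≤ p' := hp'.two_le
  have hpodd : p' % 2 = 1 := Nat.odd_iff.mp hoddp'
  have hp3 : 3 ≤ p' := by omega
  have hq3 : 3 ≤ p' ^ j := le_trans hp3 (Nat.le_self_pow hj.ne' p')
  have hqodd : (p' ^ j) % 2 = 1 := Nat.odd_iff.mp (hoddp'.pow)
  have hm0 : m ≠ 0 := by rcases hχ with rfl | rfl <;> omega
  have h2m : 2 ∣ m := by rcases hχ with rfl | rfl <;> omega
  exact ⟨fun h => forward_dir m d hm0 h2m hdm hdne h,
    fun ⟨h1, h2, h3⟩ => reverse_dir m d hm0 hdm hdne h1 h2 h3⟩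
end

section
/- Let q be a power of an odd prime. There exist χ ∈ {−1, 1} and a positive integer n such that (q − χ) divides n⁴ − 1, gcd(n² − 1, q − χ) = gcd(n − 1, q − χ), and (q − χ) does not divide n − 1, if and only if some prime ℓ with ℓ ≡ 1 (mod 4) divides q − 1 or q + 1. -/
private lemma aux_sq (a : ℕ) (ha : 1 ≤ a) : (a - 1) * (a + 1) = a ^ 2 - 1 := by
  obtain ⟨b, rfl⟩ := Nat.exists_eq_add_of_le ha
  have h1 : (1 + b) ^ 2 = b * b + 2 * b + 1 := by ring
  have h2 : (1 + b - 1) * (1 + b + 1) = b * b + 2 * b := by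
    have h3 : 1 + b - 1 = b := by omega
    rw [h3]; ring
  omega

private lemma hensel (ℓ : ℕ) (hℓ : ℓ.Prime) (h4 : ℓ % 4 = 1) :
    ∀ e : ℕ, ∃ x : ℕ, ℓ ^ e ∣ x ^ 2 + 1 := by
  haveI : Fact ℓ.Prime := ⟨hℓ⟩
  haveI : NeZero ℓ := ⟨hℓ.ne_zero⟩
  have hℓ2 : 2 ≤ ℓ := hℓ.two_le
  intro e
  induction e with
  | zero => exact ⟨0, by simp⟩
  | succ e ih =>
    rcases Nat.eq_zero_or_pos e with rfl | he
    · -- base case: solve mod ℓ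
      obtain ⟨z, hz⟩ := ZMod.exists_sq_eq_neg_one_iff.mpr (by omega : ℓ % 4 ≠ 3)
      refine ⟨z.val, ?_⟩
      rw [pow_one, ← ZMod.natCast_eq_zero_iff]
      push_cast
      rw [ZMod.natCast_val, ZMod.cast_id]
      rw [show (z : ZMod ℓ) ^ 2 = z * z by ring, ← hz]
      ring
    · obtain ⟨x, hx⟩ := ih
      obtain ⟨c, hc⟩ := hx
      have hlx : ¬ ℓ ∣ 2 * x := by
        intro h
        rcases (Nat.Prime.dvd_mul hℓ).mp h with h2 | hxd
        · have := Nat.le_of_dvd (by norm_num) h2; omega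
        · have h1 : ℓ ∣ x ^ 2 + 1 := (dvd_pow_self ℓ he.ne').trans ⟨c, hc⟩
          have h2 : ℓ ∣ x ^ 2 := hxd.trans ⟨x, by ring⟩
          have h3 : ℓ ∣ 1 := by
            have h4' := Nat.dvd_sub h1 h2
            have h5 : x ^ 2 + 1 - x ^ 2 = 1 := by omega
            rwa [h5] at h4'
          exact absurd (Nat.le_of_dvd one_pos h3) (by omega)
      have hx0 : (x : ZMod ℓ) ≠ 0 := by
        rw [Ne, ZMod.natCast_eq_zero_iff]
        exact fun h => hlx (h.mul_left 2)
      have h20 : (2 : ZMod ℓ) ≠ 0 := by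
        have h2' : ((2 : ℕ) : ZMod ℓ) ≠ 0 := by
          rw [Ne, ZMod.natCast_eq_zero_iff]
          exact fun h => hlx (h.mul_right x)
        push_cast at h2'
        exact h2'
      have ha : ((2 * x : ℕ) : ZMod ℓ) ≠ 0 := by
        rw [Ne, ZMod.natCast_eq_zero_iff]; exact hlx
      set t0 : ZMod ℓ := -(c : ZMod ℓ) * ((2 * x : ℕ) : ZMod ℓ)⁻¹ with ht0
      set t : ℕ := t0.val with ht
      refine ⟨x + t * ℓ ^ e, ?_⟩
      have key : (x + t * ℓ ^ e) ^ 2 + 1 = ℓ ^ e * (c + 2 * x * t + t ^ 2 * ℓ ^ e) := by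
        have h1 : (x + t * ℓ ^ e) ^ 2 + 1
            = (x ^ 2 + 1) + (2 * x * t + t ^ 2 * ℓ ^ e) * ℓ ^ e := by ring
        rw [h1, hc]; ring
      rw [key, pow_succ]
      refine mul_dvd_mul_left _ ?_
      rw [← ZMod.natCast_eq_zero_iff]
      push_cast
      rw [ZMod.natCast_self, zero_pow he.ne']
      have htc : (t : ZMod ℓ) = t0 := by rw [ht, ZMod.natCast_val, ZMod.cast_id]
      have h2x : ((2 * x : ℕ) : ZMod ℓ) = 2 * (x : ZMod ℓ) := by push_cast; ring
      rw [htc, ht0, h2x]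
      field_simp
      ring

private lemma construct (ℓ m : ℕ) (hℓ : ℓ.Prime) (h4 : ℓ % 4 = 1) (hm : 2 ≤ m)
    (hd : ℓ ∣ m) : ∃ n : ℕ, 0 < n ∧ m ∣ n ^ 4 - 1 ∧
      Nat.gcd (n ^ 2 - 1) m = Nat.gcd (n - 1) m ∧ ¬ m ∣ n - 1 := by
  have hm0 : m ≠ 0 := by omega
  have hℓ5 : 5 ≤ ℓ := by have := hℓ.two_le; omega
  set e := m.factorization ℓ with hedef
  set L := ℓ ^ e with hLdef
  set M := m / L with hMdef
  have hLM : L * M = m := Nat.ordProj_mul_ordCompl_eq_self m ℓ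
  have copM : Nat.Coprime ℓ M := Nat.coprime_ordCompl hℓ hm0
  have cop : Nat.Coprime L M := copM.pow_left e
  have he : 1 ≤ e := by
    have := (hℓ.pow_dvd_iff_le_factorization hm0).mp (by rwa [pow_one])
    omega
  have hLm : L ∣ m := Nat.ordProj_dvd m ℓ
  have hMm : M ∣ m := Nat.ordCompl_dvd m ℓ
  obtain ⟨x, hx⟩ := hensel ℓ hℓ h4 e
  obtain ⟨k, hk1, hk2⟩ := Nat.chineseRemainder cop x 1
  have hnx : k + m ≡ x [MOD L] := by
    have h0 : m ≡ 0 [MOD L] := Nat.modEq_zero_iff_dvd.mpr hLm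
    simpa using hk1.add h0
  have hn1M : k + m ≡ 1 [MOD M] := by
    have h0 : m ≡ 0 [MOD M] := Nat.modEq_zero_iff_dvd.mpr hMm
    simpa using hk2.add h0
  have hL2 : L ∣ (k + m) ^ 2 + 1 := by
    have h1 : (k + m) ^ 2 + 1 ≡ x ^ 2 + 1 [MOD L] := (hnx.pow 2).add_right 1
    exact Nat.modEq_zero_iff_dvd.mp (h1.trans (Nat.modEq_zero_iff_dvd.mpr hx))
  have hMn1 : M ∣ (k + m) - 1 :=
    (Nat.modEq_iff_dvd' (by omega : 1 ≤ k + m)).mp hn1M.symm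
  have hsq : ((k + m) - 1) * ((k + m) + 1) = (k + m) ^ 2 - 1 := aux_sq _ (by omega)
  have hsq4 : ((k + m) ^ 2 - 1) * ((k + m) ^ 2 + 1) = (k + m) ^ 4 - 1 := by
    have h1 := aux_sq ((k + m) ^ 2) (Nat.one_le_pow _ _ (by omega))
    have h2 : ((k + m) ^ 2) ^ 2 = (k + m) ^ 4 := by ring
    exact h2 ▸ h1
  have hd1 : (k + m) - 1 ∣ (k + m) ^ 2 - 1 := ⟨(k + m) + 1, hsq.symm⟩
  have hd2 : (k + m) ^ 2 - 1 ∣ (k + m) ^ 4 - 1 := ⟨(k + m) ^ 2 + 1, hsq4.symm⟩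
  have hℓL : ℓ ∣ L := dvd_pow_self ℓ (by omega : e ≠ 0)
  have hℓn2 : ℓ ∣ (k + m) ^ 2 + 1 := hℓL.trans hL2
  have hnotsq : ¬ ℓ ∣ (k + m) ^ 2 - 1 := by
    intro hcon
    have h2 := Nat.dvd_sub hℓn2 hcon
    have hge : 1 ≤ (k + m) ^ 2 := Nat.one_le_pow _ _ (by omega)
    have h3 : (k + m) ^ 2 + 1 - ((k + m) ^ 2 - 1) = 2 := by omega
    rw [h3] at h2
    exact absurd (Nat.le_of_dvd (by norm_num) h2) (by omega)
  have hnot1 : ¬ ℓ ∣ (k + m) - 1 := fun hcon => hnotsq (hcon.trans hd1)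
  refine ⟨k + m, by omega, ?_, ?_, ?_⟩
  · have hA : L ∣ (k + m) ^ 4 - 1 :=
      hL2.trans ⟨(k + m) ^ 2 - 1, by rw [mul_comm]; exact hsq4.symm⟩
    have hB : M ∣ (k + m) ^ 4 - 1 := hMn1.trans (hd1.trans hd2)
    have hfin := cop.mul_dvd_of_dvd_of_dvd hA hB
    rwa [hLM] at hfin
  · have copL2 : Nat.Coprime ((k + m) ^ 2 - 1) L :=
      (((hℓ.coprime_iff_not_dvd).mpr hnotsq).symm).pow_right e
    have copL1 : Nat.Coprime ((k + m) - 1) L :=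
      (((hℓ.coprime_iff_not_dvd).mpr hnot1).symm).pow_right e
    have g3 : Nat.gcd ((k + m) ^ 2 - 1) M = M := Nat.gcd_eq_right (hMn1.trans hd1)
    have g4 : Nat.gcd ((k + m) - 1) M = M := Nat.gcd_eq_right hMn1
    have e1 : Nat.gcd ((k + m) ^ 2 - 1) m = Nat.gcd ((k + m) ^ 2 - 1) (L * M) := by
      rw [hLM]
    have e2 : Nat.gcd ((k + m) - 1) m = Nat.gcd ((k + m) - 1) (L * M) := by
      rw [hLM]
    rw [e1, e2, Nat.Coprime.gcd_mul _ cop, Nat.Coprime.gcd_mul _ cop,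
      Nat.Coprime.gcd_eq_one copL2, Nat.Coprime.gcd_eq_one copL1, g3, g4]
  · exact fun hcon => hnot1 (hd.trans hcon)

/-- Proposition 3.13: existence of a Rédei permutation over P¹(F_q) with
1- and 4-cycles. -/
theorem stmt_15 (q : ℕ) (hq : ∃ p' j : ℕ, p'.Prime ∧ Odd p' ∧ 0 < j ∧ q = p' ^ j) :
    (∃ χ : ℤ, (χ = 1 ∨ χ = -1) ∧ ∃ m n : ℕ, (m : ℤ) = (q : ℤ) - χ ∧ 0 < n ∧
        m ∣ n ^ 4 - 1 ∧ Nat.gcd (n ^ 2 - 1) m = Nat.gcd (n - 1) m ∧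
        ¬ m ∣ n - 1) ↔
      (∃ ℓ : ℕ, ℓ.Prime ∧ ℓ % 4 = 1 ∧ (ℓ ∣ q - 1 ∨ ℓ ∣ q + 1)) := by
  have hq3 : 3 ≤ q := by
    obtain ⟨p', j, hp, hodd, hj, rfl⟩ := hq
    have h2 := hp.two_le
    have hne : p' ≠ 2 := by rintro rfl; exact (by decide : ¬ Odd 2) hodd
    calc 3 ≤ p' := by omega
    _ ≤ p' ^ j := Nat.le_self_pow hj.ne' p'
  constructor
  · rintro ⟨χ, hχ, m, n, hm, hn, hdvd, hgcd, hnd1⟩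
    have hmval : m = q - 1 ∨ m = q + 1 := by rcases hχ with rfl | rfl <;> omega
    have hm2 : 2 ≤ m := by omega
    have hm0 : m ≠ 0 := by omega
    have hn2 : 2 ≤ n := by
      by_contra hcon
      have h0 : n - 1 = 0 := by omega
      exact hnd1 (by simp [h0])
    have hn1 : n - 1 ≠ 0 := by omega
    -- find a prime power of m not dividing n - 1
    have hfail : ¬ m.factorization ≤ (n - 1).factorization := fun h =>
      hnd1 ((Nat.factorization_le_iff_dvd hm0 hn1).mp h)
    rw [Finsupp.le_def] at hfail
    push_neg at hfail
    obtain ⟨p, hp⟩ := hfail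
    have hpp : p.Prime := by
      by_contra h
      rw [Nat.factorization_eq_zero_of_not_prime m h] at hp; omega
    set v := (n - 1).factorization p with hvdef
    set k := v + 1 with hkdef
    have hk2 : ¬ p ^ k ∣ n - 1 := by
      rw [hpp.pow_dvd_iff_le_factorization hn1]; omega
    have hkm : p ^ k ∣ m := (hpp.pow_dvd_iff_le_factorization hm0).mpr (by omega)
    have hv : p ^ v ∣ n - 1 := Nat.ordProj_dvd _ _
    have hnd2 : ¬ p ^ k ∣ n ^ 2 - 1 := by
      intro h
      have h2 := Nat.dvd_gcd h hkm
      rw [hgcd] at h2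
      exact hk2 (h2.trans (Nat.gcd_dvd_left _ _))
    have hsq : (n - 1) * (n + 1) = n ^ 2 - 1 := aux_sq n (by omega)
    have hsq4 : (n ^ 2 - 1) * (n ^ 2 + 1) = n ^ 4 - 1 := by
      have h1 := aux_sq (n ^ 2) (Nat.one_le_pow _ _ (by omega))
      have h2 : (n ^ 2) ^ 2 = n ^ 4 := by ring
      exact h2 ▸ h1
    have hp2 : p ≠ 2 := by
      rintro rfl
      have h2m : (2 : ℕ) ∣ m := (dvd_pow_self 2 (by omega : k ≠ 0)).trans hkm
      have h2n4 : (2 : ℕ) ∣ n ^ 4 - 1 := h2m.trans hdvd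
      have hN1 : 1 ≤ n ^ 4 := Nat.one_le_pow _ _ (by omega)
      have hoddn : ¬ 2 ∣ n := by
        intro h
        have h2N : (2 : ℕ) ∣ n ^ 4 := dvd_pow h (by norm_num)
        omega
      have h2n1 : (2 : ℕ) ∣ n - 1 := by omega
      have h2n1' : (2 : ℕ) ∣ n + 1 := by omega
      have hv1 : 1 ≤ v := (hpp.pow_dvd_iff_le_factorization hn1).mp (by rwa [pow_one])
      have hfin : (2 : ℕ) ^ k ∣ n ^ 2 - 1 := by
        rw [← hsq, hkdef, pow_succ]
        exact mul_dvd_mul hv h2n1'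
      exact hnd2 hfin
    have hpodd : p % 2 = 1 := Nat.odd_iff.mp (hpp.odd_of_ne_two hp2)
    have hpn2 : p ∣ n ^ 2 + 1 := by
      by_contra h
      have cop : (p ^ k).Coprime (n ^ 2 + 1) :=
        ((hpp.coprime_iff_not_dvd).mpr h).pow_left _
      have h1 : p ^ k ∣ (n ^ 2 - 1) * (n ^ 2 + 1) := by
        rw [hsq4]; exact hkm.trans hdvd
      exact hnd2 (cop.dvd_of_dvd_mul_right h1)
    have hp41 : p % 4 = 1 := by
      haveI : Fact p.Prime := ⟨hpp⟩
      haveI : NeZero p := ⟨hpp.ne_zero⟩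
      have hcast : ((n ^ 2 + 1 : ℕ) : ZMod p) = 0 :=
        (ZMod.natCast_eq_zero_iff _ _).mpr hpn2
      push_cast at hcast
      have hsqneg : ((n : ZMod p)) ^ 2 = -1 := eq_neg_of_add_eq_zero_left hcast
      have hIsSq : IsSquare (-1 : ZMod p) := ⟨n, by rw [← hsqneg]; ring⟩
      have := ZMod.exists_sq_eq_neg_one_iff.mp hIsSq
      omega
    refine ⟨p, hpp, hp41, ?_⟩
    have hpm : p ∣ m := (dvd_pow_self p (by omega : k ≠ 0)).trans hkm
    rcases hmval with rfl | rfl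
    · exact Or.inl hpm
    · exact Or.inr hpm
  · rintro ⟨ℓ, hℓ, h4, hdvd⟩
    rcases hdvd with h | h
    · obtain ⟨n, hn, h1, h2, h3⟩ := construct ℓ (q - 1) hℓ h4 (by omega) h
      exact ⟨1, Or.inl rfl, q - 1, n, by omega, hn, h1, h2, h3⟩
    · obtain ⟨n, hn, h1, h2, h3⟩ := construct ℓ (q + 1) hℓ h4 (by omega) h
      exact ⟨-1, Or.inr rfl, q + 1, n, by omega, hn, h1, h2, h3⟩
end

section
/- Let d be a proper divisor of m with ν₂(d) = ν₂(m), ν_ℓ(d) = ν_ℓ(m) for every prime ℓ with ℓ ≡ 3 (mod 4), and gcd(d, m/d) = 1. Let u be the number of primes ℓ such that ℓ ≡ 1 (mod 4), ℓ divides m, and ℓ does not divide d. Then the number of integers n with 1 ≤ n ≤ m such that m divides n⁴ − 1, gcd(n² − 1, m) = d, and gcd(n − 1, m) = d equals 2^u. -/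
lemma aux_exists_int (p : ℕ) (hp : p.Prime) (hp4 : p % 4 = 1) :
    ∀ e : ℕ, 0 < e → ∃ a : ℤ, (p : ℤ) ^ e ∣ a ^ 2 + 1 := by
  haveI : Fact p.Prime := ⟨hp⟩
  have hp2 : p ≠ 2 := by omega
  intro e he
  induction e with
  | zero => omega
  | succ e ih =>
    rcases Nat.eq_zero_or_pos e with he0 | he0
    · subst he0
      have h1 : IsSquare (-1 : ZMod p) := ZMod.exists_sq_eq_neg_one_iff.mpr (by omega)
      obtain ⟨r, hr⟩ := h1
      refine ⟨(r.val : ℤ), ?_⟩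
      rw [pow_one, show ((r.val : ℤ)^2 + 1 : ℤ) = ((r.val^2 + 1 : ℕ) : ℤ) by push_cast; ring,
        Int.natCast_dvd_natCast, ← ZMod.natCast_eq_zero_iff]
      push_cast
      rw [ZMod.natCast_val, ZMod.cast_id, pow_two, ← hr]
      ring
    · obtain ⟨a, ha⟩ := ih he0
      obtain ⟨c, hc⟩ := ha
      have hpa : ¬ (p : ℤ) ∣ a := by
        intro hdvd
        have h1 : (p : ℤ) ∣ a ^ 2 + 1 := hc ▸ Dvd.dvd.mul_right (dvd_pow_self _ he0.ne') c
        have h2 : (p : ℤ) ∣ a ^ 2 := hdvd.pow (by norm_num)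
        have : (p : ℤ) ∣ 1 := (Int.dvd_add_right h2).mp h1
        have h3 : (p:ℤ) ≤ 1 := Int.le_of_dvd one_pos this
        have h4 : p ≤ 1 := by exact_mod_cast h3
        have := hp.two_le
        omega
      have h2z : ((2:ℕ) : ZMod p) ≠ 0 := by
        rw [Ne, ZMod.natCast_eq_zero_iff]
        intro h
        exact hp2 ((Nat.prime_dvd_prime_iff_eq hp Nat.prime_two).mp h)
      have h2a : (2 * (a : ZMod p)) ≠ 0 := by
        apply mul_ne_zero
        · exact_mod_cast h2z
        · rw [Ne, ZMod.intCast_zmod_eq_zero_iff_dvd]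
          exact hpa
      set t : ℤ := (((- (c : ZMod p)) * (2 * (a : ZMod p))⁻¹).val : ℤ) with ht
      have hpt : (p : ℤ) ∣ c + 2 * a * t := by
        rw [← ZMod.intCast_zmod_eq_zero_iff_dvd]
        push_cast
        rw [show ((((- (c : ZMod p)) * (2 * (a : ZMod p))⁻¹).val : ℤ) : ZMod p)
            = (- (c : ZMod p)) * (2 * (a : ZMod p))⁻¹ by
          rw [Int.cast_natCast, ZMod.natCast_val, ZMod.cast_id]]
        linear_combination (-(c : ZMod p)) * mul_inv_cancel₀ h2a
      obtain ⟨e', rfl⟩ : ∃ e', e = e' + 1 := ⟨e - 1, by omega⟩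
      obtain ⟨w, hw⟩ := hpt
      exact ⟨a + t * (p : ℤ)^(e'+1), w + t^2 * (p:ℤ)^e',
        by push_cast; linear_combination hc + (p:ℤ)^(e'+1) * hw⟩


lemma zmod_isLocal (p e : ℕ) (hp : p.Prime) (he : 0 < e) : IsLocalRing (ZMod (p^e)) := by
  haveI : Fact (1 < p^e) := ⟨Nat.one_lt_pow he.ne' hp.one_lt⟩
  have key : ∀ a : ZMod (p^e), ¬ p ∣ a.val → IsUnit a := by
    intro a hnd
    have h1 : ((a.val : ℕ) : ZMod (p^e)) = a := by rw [ZMod.natCast_val, ZMod.cast_id]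
    rw [← h1, ZMod.isUnit_iff_coprime]
    exact Nat.Coprime.pow_right _ ((Nat.Prime.coprime_iff_not_dvd hp).mpr hnd).symm
  apply IsLocalRing.of_isUnit_or_isUnit_one_sub_self
  intro a
  by_cases h : p ∣ a.val
  · right
    apply key
    intro h2
    have hsum : (a.val + (1 - a).val) ≡ 1 [MOD p^e] := by
      rw [← ZMod.natCast_eq_natCast_iff]
      push_cast
      rw [ZMod.natCast_val, ZMod.cast_id, ZMod.natCast_val, ZMod.cast_id]
      ring
    have hmodp : (a.val + (1 - a).val) ≡ 1 [MOD p] :=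
      hsum.of_dvd (dvd_pow_self p he.ne')
    have hd : p ∣ a.val + (1 - a).val := Nat.dvd_add h h2
    have : (0:ℕ) ≡ 1 [MOD p] := by
      calc (0:ℕ) ≡ a.val + (1 - a).val [MOD p] := ((Nat.modEq_zero_iff_dvd).mpr hd).symm
        _ ≡ 1 [MOD p] := hmodp
    have := (Nat.modEq_iff_dvd' (by norm_num)).mp this
    simp at this
    exact hp.one_lt.ne' this
  · exact Or.inl (key a h)

lemma card_sqrt_neg_one_prime_pow (p e : ℕ) (hp : p.Prime) (hp4 : p % 4 = 1) (he : 0 < e) :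
    Nat.card {y : ZMod (p^e) // y^2 = -1} = 2 := by
  haveI : Fact (1 < p^e) := ⟨Nat.one_lt_pow he.ne' hp.one_lt⟩
  haveI := zmod_isLocal p e hp he
  obtain ⟨A, hA⟩ := aux_exists_int p hp hp4 e he
  set i : ZMod (p^e) := ((A : ℤ) : ZMod (p^e)) with hidef
  have hi : i^2 = -1 := by
    have h0 : ((A^2 + 1 : ℤ) : ZMod (p^e)) = 0 := by
      rw [ZMod.intCast_zmod_eq_zero_iff_dvd]
      exact_mod_cast hA
    push_cast at h0
    linear_combination h0
  have unit_of_sq : ∀ y : ZMod (p^e), y^2 = -1 → IsUnit y := by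
    intro y hy
    exact IsUnit.of_mul_eq_one (-y) (by linear_combination -hy)
  have h2u : IsUnit (2 : ZMod (p^e)) := by
    rw [show (2 : ZMod (p^e)) = ((2:ℕ) : ZMod (p^e)) by push_cast; ring, ZMod.isUnit_iff_coprime]
    apply Nat.Coprime.pow_right
    exact (Nat.coprime_primes Nat.prime_two hp).mpr (by omega)
  have hset : {y : ZMod (p^e) | y^2 = -1} = {i, -i} := by
    ext y
    simp only [Set.mem_setOf_eq, Set.mem_insert_iff, Set.mem_singleton_iff]
    constructor
    · intro hy
      have hdecomp : (y - i) * (y + i) = 0 := by linear_combination hy - hi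
      have hsum : IsUnit ((y - i) + (y + i)) := by
        rw [show (y - i) + (y + i) = 2 * y by ring]
        exact h2u.mul (unit_of_sq y hy)
      rcases IsLocalRing.isUnit_or_isUnit_of_isUnit_add hsum with h | h
      · right
        have := (IsUnit.mul_right_eq_zero h).mp hdecomp
        exact eq_neg_of_add_eq_zero_left this
      · left
        have := (IsUnit.mul_left_eq_zero h).mp hdecomp
        exact sub_eq_zero.mp this
    · rintro (rfl | rfl)
      · exact hi
      · rw [neg_pow, hi]; ring
  have hne : i ≠ -i := by
    intro h
    have h2i : (2 : ZMod (p^e)) * i = 0 := by linear_combination h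
    exact (h2u.mul (unit_of_sq i hi)).ne_zero h2i
  have hcard : Nat.card {y : ZMod (p^e) // y^2 = -1}
      = ({y : ZMod (p^e) | y^2 = -1} : Set _).ncard := (Nat.card_coe_set_eq _)
  rw [hcard, hset, Set.ncard_pair hne]


lemma card_sqrt_mul (a b : ℕ) (hab : a.Coprime b) :
    Nat.card {y : ZMod (a*b) // y^2 = -1}
      = Nat.card {y : ZMod a // y^2 = -1} * Nat.card {y : ZMod b // y^2 = -1} := by
  let e := ZMod.chineseRemainder hab
  have key : ∀ z : ZMod a × ZMod b, z^2 = -1 ↔ (z.1^2 = -1 ∧ z.2^2 = -1) := by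
    intro z; rw [Prod.ext_iff]; simp [Prod.pow_def]
  have e1 : {y : ZMod (a*b) // y^2 = -1}
      ≃ {z : ZMod a × ZMod b // z.1^2 = -1 ∧ z.2^2 = -1} := by
    refine e.toEquiv.subtypeEquiv fun y => ?_
    have hsame : (e.toEquiv y) = e y := rfl
    rw [hsame, ← key]
    exact ⟨fun h => by rw [← map_pow, h, map_neg, map_one],
      fun h => e.injective (by rwa [map_pow, map_neg, map_one])⟩
  rw [Nat.card_congr (e1.trans (Equiv.subtypeProdEquivProd
    (p := fun x : ZMod a => x^2 = -1) (q := fun y : ZMod b => y^2 = -1))), Nat.card_prod]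

lemma card_sqrt_one : Nat.card {y : ZMod 1 // y^2 = -1} = 1 := by
  haveI : Unique {y : ZMod 1 // y^2 = -1} :=
    ⟨⟨⟨0, Subsingleton.elim _ _⟩⟩, fun a => Subtype.ext (Subsingleton.elim _ _)⟩
  exact Nat.card_unique

lemma card_sqrt_all : ∀ N : ℕ, N ≠ 0 → (∀ p : ℕ, p.Prime → p ∣ N → p % 4 = 1) →
    Nat.card {y : ZMod N // y^2 = -1} = 2 ^ N.primeFactors.card := by
  intro N
  induction N using Nat.strong_induction_on with
  | _ N ih =>
    intro h0 hall
    rcases eq_or_ne N 1 with rfl | hN1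
    · simpa using card_sqrt_one
    · set p := N.minFac with hpdef
      have hp : p.Prime := Nat.minFac_prime hN1
      have hpd : p ∣ N := Nat.minFac_dvd N
      set e := N.factorization p with hedef
      have he : 0 < e := hp.factorization_pos_of_dvd h0 hpd
      set M := N / p^e with hMdef
      have hNM : p^e * M = N := Nat.ordProj_mul_ordCompl_eq_self N p
      have hM0 : M ≠ 0 := (Nat.ordCompl_pos p h0).ne'
      have hcop : Nat.Coprime (p^e) M :=
        Nat.Coprime.pow_left _ (Nat.coprime_ordCompl hp h0)
      have hMlt : M < N := by
        apply Nat.div_lt_self (Nat.pos_of_ne_zero h0)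
        exact Nat.one_lt_pow he.ne' hp.one_lt
      have hrec := ih M hMlt hM0 (fun q hq hqM => hall q hq (hqM.trans (Nat.ordCompl_dvd N p)))
      have hpnotM : p ∉ M.primeFactors := by
        intro h
        have hdvd : p ∣ M := Nat.dvd_of_mem_primeFactors h
        exact hp.one_lt.ne' ((Nat.coprime_ordCompl hp h0).eq_one_of_dvd hdvd)
      have hpf : (p^e * M).primeFactors = insert p M.primeFactors := by
        rw [Nat.primeFactors_mul (pow_ne_zero _ hp.pos.ne') hM0,
          Nat.primeFactors_prime_pow he.ne' hp]
        ext q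
        simp [Finset.mem_union, Finset.mem_insert]
      rw [← hNM, card_sqrt_mul _ _ hcop,
        card_sqrt_neg_one_prime_pow p e hp (hall p hp hpd) he, hrec, hpf,
        Finset.card_insert_of_notMem hpnotM, pow_succ]
      ring


lemma count_lemma (m d m' : ℕ) (hm : 2 ≤ m) (hmm' : m = d * m') (hd0 : d ≠ 0)
    (hm'0 : m' ≠ 0) (hcop : Nat.Coprime d m') :
    ((Finset.Icc 1 m).filter (fun n => d ∣ n - 1 ∧ m' ∣ n^2 + 1)).card
      = Nat.card {y : ZMod m' // y^2 = -1} := by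
  haveI : NeZero d := ⟨hd0⟩
  haveI : NeZero m' := ⟨hm'0⟩
  have hdm : d ∣ m := hmm' ▸ dvd_mul_right d m'
  have hm'm : m' ∣ m := hmm' ▸ dvd_mul_left m' d
  have key : Nat.card {y : ZMod m' // y^2 = -1}
      = (Finset.univ.filter (fun z : ZMod d × ZMod m' => z.1 = 1 ∧ z.2^2 = -1)).card := by
    calc Nat.card {y : ZMod m' // y^2 = -1}
        = Nat.card ({x : ZMod d // x = 1} × {y : ZMod m' // y^2 = -1}) := by
          rw [Nat.card_prod, Nat.card_eq_fintype_card (α := {x : ZMod d // x = 1}),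
            Fintype.card_subtype_eq, one_mul]
      _ = Nat.card {z : ZMod d × ZMod m' // z.1 = 1 ∧ z.2^2 = -1} :=
          (Nat.card_congr (Equiv.subtypeProdEquivProd
            (p := fun x : ZMod d => x = 1) (q := fun y : ZMod m' => y^2 = -1))).symm
      _ = (Finset.univ.filter (fun z : ZMod d × ZMod m' => z.1 = 1 ∧ z.2^2 = -1)).card := by
          rw [Nat.card_eq_fintype_card, Fintype.card_subtype]
  rw [key]
  apply Finset.card_bij (fun (n : ℕ) _ => (((n : ZMod d), (n : ZMod m')) : ZMod d × ZMod m'))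
  · -- maps to target
    intro n hn
    simp only [Finset.mem_filter, Finset.mem_Icc] at hn
    obtain ⟨⟨h1n, hnm⟩, hd1, hm'1⟩ := hn
    simp only [Finset.mem_filter, Finset.mem_univ, true_and]
    constructor
    · have h0 : ((n - 1 : ℕ) : ZMod d) = 0 := (ZMod.natCast_eq_zero_iff _ _).mpr hd1
      rw [Nat.cast_sub h1n] at h0
      push_cast at h0
      linear_combination h0
    · have h0 : ((n^2 + 1 : ℕ) : ZMod m') = 0 := (ZMod.natCast_eq_zero_iff _ _).mpr hm'1
      push_cast at h0
      linear_combination h0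
  · -- injective
    intro a ha b hb heq
    simp only [Finset.mem_filter, Finset.mem_Icc] at ha hb
    rw [Prod.mk.injEq] at heq
    have h1 : a ≡ b [MOD d] := (ZMod.natCast_eq_natCast_iff _ _ _).mp heq.1
    have h2 : a ≡ b [MOD m'] := (ZMod.natCast_eq_natCast_iff _ _ _).mp heq.2
    have h3 : a ≡ b [MOD m] := by
      rw [hmm']
      exact (Nat.modEq_and_modEq_iff_modEq_mul hcop).mp ⟨h1, h2⟩
    have h4 : a % m = b % m := h3
    rcases lt_or_eq_of_le ha.1.2 with ham | ham <;>
      rcases lt_or_eq_of_le hb.1.2 with hbm | hbm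
    · rwa [Nat.mod_eq_of_lt ham, Nat.mod_eq_of_lt hbm] at h4
    · rw [Nat.mod_eq_of_lt ham, hbm, Nat.mod_self] at h4
      omega
    · rw [Nat.mod_eq_of_lt hbm, ham, Nat.mod_self] at h4
      omega
    · omega
  · -- surjective
    intro z hz
    simp only [Finset.mem_filter, Finset.mem_univ, true_and] at hz
    obtain ⟨hz1, hz2⟩ := hz
    obtain ⟨k, hk1, hk2⟩ := Nat.chineseRemainder hcop 1 (z.2.val)
    set n := if k % m = 0 then m else k % m with hndef
    have hnk : n ≡ k [MOD m] := by
      unfold n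
      split_ifs with h
      · unfold Nat.ModEq
        rw [Nat.mod_self, h]
      · unfold Nat.ModEq
        rw [Nat.mod_mod_of_dvd k dvd_rfl]
    have h1n : 1 ≤ n := by
      unfold n
      split_ifs with h
      · omega
      · omega
    have hnm : n ≤ m := by
      have := Nat.mod_lt k (show 0 < m by omega)
      unfold n
      split_ifs with h <;> omega
    have hnd : n ≡ 1 [MOD d] := (hnk.of_dvd hdm).trans hk1
    have hnm' : n ≡ z.2.val [MOD m'] := (hnk.of_dvd hm'm).trans hk2
    have hvd : m' ∣ z.2.val^2 + 1 := by
      rw [← ZMod.natCast_eq_zero_iff]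
      push_cast
      rw [ZMod.natCast_val, ZMod.cast_id, hz2]
      ring
    refine ⟨n, ?_, ?_⟩
    · simp only [Finset.mem_filter, Finset.mem_Icc]
      refine ⟨⟨h1n, hnm⟩, ?_, ?_⟩
      · exact (Nat.modEq_iff_dvd' h1n).mp hnd.symm
      · have : n^2 + 1 ≡ z.2.val^2 + 1 [MOD m'] := (hnm'.pow 2).add_right 1
        exact (Nat.modEq_zero_iff_dvd).mp (this.trans ((Nat.modEq_zero_iff_dvd).mpr hvd))
    · rw [Prod.mk.injEq]
      constructor
      · rw [hz1, show (1 : ZMod d) = ((1:ℕ) : ZMod d) by norm_num,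
          ZMod.natCast_eq_natCast_iff]
        exact hnd
      · have := (ZMod.natCast_eq_natCast_iff _ _ _).mpr hnm'
        rw [this, ZMod.natCast_val, ZMod.cast_id]


lemma pred_equiv (m d m' n : ℕ) (hmm' : m = d * m') (hcop : d.Coprime m')
    (hm'odd : ¬ 2 ∣ m') (h1n : 1 ≤ n) :
    (m ∣ n^4 - 1 ∧ Nat.gcd (n^2-1) m = d ∧ Nat.gcd (n-1) m = d)
      ↔ (d ∣ n - 1 ∧ m' ∣ n^2 + 1) := by
  have hdm : d ∣ m := hmm' ▸ dvd_mul_right d m'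
  have hm'm : m' ∣ m := hmm' ▸ dvd_mul_left m' d
  have hn2 : 1 ≤ n^2 := Nat.one_le_pow _ _ h1n
  have hsq : n^4 - 1 = (n^2 - 1) * (n^2 + 1) := by
    obtain ⟨k, hk⟩ : ∃ k, n^2 = k + 1 := ⟨n^2 - 1, by omega⟩
    have h4 : n^4 = (k+1) * (k+1) := by
      rw [show n^4 = (n^2) * (n^2) by ring, hk]
    rw [hk, h4]
    rw [Nat.sub_eq_iff_eq_add (by nlinarith), Nat.add_sub_cancel]
    ring
  have hsub : n - 1 ∣ n^2 - 1 := by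
    have := Nat.sub_dvd_pow_sub_pow n 1 2
    simpa using this
  have hsub4 : n - 1 ∣ n^4 - 1 := by
    have := Nat.sub_dvd_pow_sub_pow n 1 4
    simpa using this
  constructor
  · rintro ⟨h4, hg2, hg1⟩
    refine ⟨hg1 ▸ Nat.gcd_dvd_left _ _, ?_⟩
    have hgd : Nat.gcd (n^2-1) m' ∣ d :=
      hg2 ▸ Nat.gcd_dvd_gcd_of_dvd_right (n^2-1) hm'm
    have hcop' : Nat.gcd d m' = 1 := hcop
    have hdvd1 : Nat.gcd (n^2-1) m' ∣ Nat.gcd d m' := Nat.dvd_gcd hgd (Nat.gcd_dvd_right _ _)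
    rw [hcop'] at hdvd1
    have hone : Nat.gcd (n^2-1) m' = 1 := Nat.dvd_one.mp hdvd1
    have hcop2 : Nat.Coprime m' (n^2-1) := (Nat.coprime_comm).mp hone
    have hdvd : m' ∣ (n^2-1) * (n^2+1) := hsq ▸ hm'm.trans h4
    exact hcop2.dvd_of_dvd_mul_left hdvd
  · rintro ⟨hd1, hm'1⟩
    have hcopstrong : Nat.Coprime (n^2-1) m' := by
      set g := Nat.gcd (n^2-1) m' with hg
      have hg1 : g ∣ n^2 - 1 := Nat.gcd_dvd_left _ _
      have hg2 : g ∣ m' := Nat.gcd_dvd_right _ _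
      have hg3 : g ∣ n^2 + 1 := hg2.trans hm'1
      have hg4 : g ∣ 2 := by
        have := Nat.dvd_sub hg3 hg1
        rwa [show n^2 + 1 - (n^2 - 1) = 2 by omega] at this
      rcases (Nat.dvd_prime Nat.prime_two).mp hg4 with h | h
      · exact h
      · exact absurd (h ▸ hg2) hm'odd
    have hcop1 : Nat.Coprime (n-1) m' := Nat.Coprime.coprime_dvd_left hsub hcopstrong
    have hd2 : d ∣ n^2 - 1 := hd1.trans hsub
    have hm'4 : m' ∣ n^4 - 1 := hm'1.trans (hsq ▸ dvd_mul_left (n^2+1) (n^2-1))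
    refine ⟨?_, ?_, ?_⟩
    · rw [hmm']
      exact Nat.Coprime.mul_dvd_of_dvd_of_dvd hcop (hd1.trans hsub4) hm'4
    · apply Nat.dvd_antisymm
      · have hgm' : Nat.Coprime (Nat.gcd (n^2-1) m) m' :=
          Nat.Coprime.coprime_dvd_left (Nat.gcd_dvd_left _ _) hcopstrong
        have : Nat.gcd (n^2-1) m ∣ d * m' := hmm' ▸ Nat.gcd_dvd_right _ _
        exact (Nat.Coprime.dvd_of_dvd_mul_right hgm' this)
      · exact Nat.dvd_gcd hd2 hdm
    · apply Nat.dvd_antisymm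
      · have hgm' : Nat.Coprime (Nat.gcd (n-1) m) m' :=
          Nat.Coprime.coprime_dvd_left (Nat.gcd_dvd_left _ _) hcop1
        have : Nat.gcd (n-1) m ∣ d * m' := hmm' ▸ Nat.gcd_dvd_right _ _
        exact (Nat.Coprime.dvd_of_dvd_mul_right hgm' this)
      · exact Nat.dvd_gcd hd1 hdm

/-- Proposition 3.14: the number of Rédei permutations with d + χ + 1 fixed
points and 4-cycles for a fixed parameter a. -/
theorem stmt_16 (q : ℕ) (hq : ∃ p' j : ℕ, p'.Prime ∧ Odd p' ∧ 0 < j ∧ q = p' ^ j)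
    (χ : ℤ) (hχ : χ = 1 ∨ χ = -1) (m : ℕ) (hm : (m : ℤ) = (q : ℤ) - χ)
    (d : ℕ) (hdm : d ∣ m) (hdne : d ≠ m)
    (h2 : padicValNat 2 d = padicValNat 2 m)
    (h3 : ∀ ℓ : ℕ, ℓ.Prime → ℓ % 4 = 3 → padicValNat ℓ d = padicValNat ℓ m)
    (hgcd : Nat.gcd d (m / d) = 1)
    (u : ℕ)
    (hu : u = (m.primeFactors.filter (fun ℓ => ℓ % 4 = 1 ∧ ¬ ℓ ∣ d)).card) :
    ((Finset.Icc 1 m).filter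
      (fun n => m ∣ n ^ 4 - 1 ∧ Nat.gcd (n ^ 2 - 1) m = d ∧
        Nat.gcd (n - 1) m = d)).card = 2 ^ u := by
  obtain ⟨p', j, hp', hodd, hj, hqeq⟩ := hq
  have hq3 : 3 ≤ q := by
    have h2' : 2 ≤ p' := hp'.two_le
    have hne2 : p' ≠ 2 := by rintro rfl; exact (Nat.not_odd_iff_even.mpr even_two) hodd
    have : p' ≤ q := hqeq ▸ Nat.le_self_pow hj.ne' p'
    omega
  have hm2 : 2 ≤ m := by
    have hq3' : (3:ℤ) ≤ (q:ℤ) := by exact_mod_cast hq3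
    have : (2:ℤ) ≤ (m:ℤ) := by rcases hχ with rfl | rfl <;> omega
    exact_mod_cast this
  have hm0 : m ≠ 0 := by omega
  have hd0 : d ≠ 0 := by rintro rfl; rw [zero_dvd_iff] at hdm; exact hm0 hdm
  set m' := m / d with hm'def
  have hmm' : m = d * m' := (Nat.mul_div_cancel' hdm).symm
  have hm'0 : m' ≠ 0 := by intro h; rw [h, mul_zero] at hmm'; exact hm0 hmm'
  have hcop : Nat.Coprime d m' := hgcd
  have hm'odd : ¬ 2 ∣ m' := by
    intro hdvd
    have hmul : padicValNat 2 m = padicValNat 2 d + padicValNat 2 m' := by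
      rw [hmm']; exact padicValNat.mul hd0 hm'0
    have hval : padicValNat 2 m' = 0 := by omega
    rcases padicValNat.eq_zero_iff.mp hval with h | h | h
    · norm_num at h
    · exact hm'0 h
    · exact h hdvd
  have hm'3 : ∀ ℓ : ℕ, ℓ.Prime → ℓ % 4 = 3 → ¬ ℓ ∣ m' := by
    intro ℓ hℓ h4 hdvd
    haveI : Fact ℓ.Prime := ⟨hℓ⟩
    have hmul : padicValNat ℓ m = padicValNat ℓ d + padicValNat ℓ m' := by
      rw [hmm']; exact padicValNat.mul hd0 hm'0
    have h3' := h3 ℓ hℓ h4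
    have hval : padicValNat ℓ m' = 0 := by omega
    rcases padicValNat.eq_zero_iff.mp hval with h | h | h
    · exact hℓ.one_lt.ne' h
    · exact hm'0 h
    · exact h hdvd
  have hall : ∀ ℓ : ℕ, ℓ.Prime → ℓ ∣ m' → ℓ % 4 = 1 := by
    intro ℓ hℓ hdvd
    have hne2 : ℓ ≠ 2 := fun h => hm'odd (h ▸ hdvd)
    have hoddℓ : ℓ % 2 = 1 := Nat.odd_iff.mp (hℓ.odd_of_ne_two hne2)
    have h14 : ℓ % 4 = 1 ∨ ℓ % 4 = 3 := by omega
    rcases h14 with h | h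
    · exact h
    · exact absurd hdvd (hm'3 ℓ hℓ h)
  have hu' : u = m'.primeFactors.card := by
    rw [hu]
    congr 1
    ext ℓ
    simp only [Finset.mem_filter, Nat.mem_primeFactors]
    constructor
    · rintro ⟨⟨hℓp, hℓm, _⟩, h41, hnd⟩
      refine ⟨hℓp, ?_, hm'0⟩
      have hdm2 : ℓ ∣ d * m' := hmm' ▸ hℓm
      exact ((Nat.Prime.dvd_mul hℓp).mp hdm2).resolve_left hnd
    · rintro ⟨hℓp, hℓm', _⟩
      have hnd : ¬ ℓ ∣ d := by
        intro hd'
        have hgg : ℓ ∣ Nat.gcd d m' := Nat.dvd_gcd hd' hℓm'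
        have hcop'' : Nat.gcd d m' = 1 := hcop
        rw [hcop''] at hgg
        exact hℓp.one_lt.ne' (Nat.dvd_one.mp hgg)
      exact ⟨⟨hℓp, hmm' ▸ (hℓm'.mul_left d), hm0⟩, hall ℓ hℓp hℓm', hnd⟩
  rw [Finset.filter_congr
    (fun n hn => pred_equiv m d m' n hmm' hcop hm'odd (Finset.mem_Icc.mp hn).1)]
  rw [count_lemma m d m' hm2 hmm' hd0 hm'0 hcop, card_sqrt_all m' hm'0 hall, hu']
end

section
/- Let r be the number of primes ℓ such that ℓ ≡ 1 (mod 4) and ℓ divides m. Then the number of integers n with 2 ≤ n ≤ m such that m divides n⁴ − 1 and gcd(n² − 1, m) = gcd(n − 1, m) equals 3^r − 1. -/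
open Finset

namespace Stmt17


/-- natural-number count of the statement -/
def cnt (m : ℕ) : ℕ :=
  ((Finset.Icc 1 m).filter
    (fun n => m ∣ n ^ 4 - 1 ∧ Nat.gcd (n ^ 2 - 1) m = Nat.gcd (n - 1) m)).card

def rr (m : ℕ) : ℕ := (m.primeFactors.filter (fun ℓ => ℓ % 4 = 1)).card

def Q (m : ℕ) [NeZero m] (x : ZMod m) : Prop :=
  x ^ 4 = 1 ∧ Nat.gcd (x ^ 2 - 1).val m = Nat.gcd (x - 1).val m

instance (m : ℕ) [NeZero m] (x : ZMod m) : Decidable (Q m x) := by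
  unfold Q; infer_instance

def Qset (m : ℕ) [NeZero m] : Finset (ZMod m) := Finset.univ.filter (Q m)

lemma gcd_val_natCast (m : ℕ) [NeZero m] (a : ℕ) :
    Nat.gcd ((a : ZMod m)).val m = Nat.gcd a m := by
  rw [ZMod.val_natCast, ← Nat.gcd_rec, Nat.gcd_comm]

lemma cast_pow_sub_one (m n k : ℕ) (hn : 1 ≤ n) :
    ((n ^ k - 1 : ℕ) : ZMod m) = (n : ZMod m) ^ k - 1 := by
  have h : 1 ≤ n ^ k := Nat.one_le_pow _ _ hn
  push_cast [Nat.cast_sub h]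
  ring

lemma cond_iff (m n : ℕ) [NeZero m] (hn : 1 ≤ n) :
    (m ∣ n ^ 4 - 1 ∧ Nat.gcd (n ^ 2 - 1) m = Nat.gcd (n - 1) m) ↔ Q m (n : ZMod m) := by
  constructor
  · rintro ⟨h1, h2⟩
    constructor
    · have : ((n ^ 4 - 1 : ℕ) : ZMod m) = 0 :=
        (ZMod.natCast_eq_zero_iff _ _).mpr h1
      rw [cast_pow_sub_one] at this
      · linear_combination this
      · exact hn
    · have e2 : ((n : ZMod m) ^ 2 - 1) = ((n ^ 2 - 1 : ℕ) : ZMod m) :=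
        (cast_pow_sub_one m n 2 hn).symm
      have e1 : ((n : ZMod m) - 1) = ((n - 1 : ℕ) : ZMod m) := by
        have := cast_pow_sub_one m n 1 hn
        simpa using this.symm
      rw [e2, e1, gcd_val_natCast, gcd_val_natCast]
      exact h2
  · rintro ⟨h1, h2⟩
    constructor
    · rw [← ZMod.natCast_eq_zero_iff, cast_pow_sub_one m n 4 hn]
      linear_combination h1
    · have e2 : ((n : ZMod m) ^ 2 - 1) = ((n ^ 2 - 1 : ℕ) : ZMod m) :=
        (cast_pow_sub_one m n 2 hn).symm
      have e1 : ((n : ZMod m) - 1) = ((n - 1 : ℕ) : ZMod m) := by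
        have := cast_pow_sub_one m n 1 hn
        simpa using this.symm
      rw [e2, e1, gcd_val_natCast, gcd_val_natCast] at h2
      exact h2

lemma cnt_eq_card_Qset (m : ℕ) [NeZero m] : cnt m = (Qset m).card := by
  have hm : 0 < m := Nat.pos_of_ne_zero (NeZero.ne m)
  unfold cnt
  refine Finset.card_bij (fun n _ => (n : ZMod m)) ?_ ?_ ?_
  · intro n hn
    simp only [Finset.mem_filter, Finset.mem_Icc] at hn
    obtain ⟨⟨h1, h2⟩, hc⟩ := hn
    simp only [Qset, Finset.mem_filter, Finset.mem_univ, true_and]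
    exact (cond_iff m n h1).mp hc
  · intro n hn n' hn' hc
    simp only [Finset.mem_filter, Finset.mem_Icc] at hn hn'
    have h := (ZMod.natCast_eq_natCast_iff _ _ _).mp hc
    have h' : n % m = n' % m := h
    have e1 : n % m = n ∨ n = m := by
      rcases lt_or_eq_of_le hn.1.2 with h | h
      · exact Or.inl (Nat.mod_eq_of_lt h)
      · exact Or.inr h
    have e2 : n' % m = n' ∨ n' = m := by
      rcases lt_or_eq_of_le hn'.1.2 with h | h
      · exact Or.inl (Nat.mod_eq_of_lt h)
      · exact Or.inr h
    rcases e1 with h1 | h1 <;> rcases e2 with h2 | h2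
    · rw [h1, h2] at h'; exact h'
    · rw [h1, h2, Nat.mod_self] at h'; omega
    · rw [h2, h1, Nat.mod_self] at h'; omega
    · rw [h1, h2]
  · intro x hx
    simp only [Qset, Finset.mem_filter, Finset.mem_univ, true_and] at hx
    by_cases h0 : x = 0
    · refine ⟨m, ?_, ?_⟩
      · simp only [Finset.mem_filter, Finset.mem_Icc]
        refine ⟨⟨hm, le_refl m⟩, ?_⟩
        apply (cond_iff m m hm).mpr
        rw [ZMod.natCast_self]
        rw [h0] at hx
        exact hx
      · show ((m : ℕ) : ZMod m) = x
        rw [ZMod.natCast_self, h0]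
    · refine ⟨x.val, ?_, ?_⟩
      · have hv0 : 0 < x.val := by
          rcases Nat.eq_zero_or_pos x.val with h | h
          · exact absurd ((ZMod.val_eq_zero x).mp h) h0
          · exact h
        simp only [Finset.mem_filter, Finset.mem_Icc]
        refine ⟨⟨hv0, le_of_lt (ZMod.val_lt x)⟩, ?_⟩
        apply (cond_iff m x.val hv0).mpr
        rw [ZMod.natCast_rightInverse x]
        exact hx
      · show ((x.val : ℕ) : ZMod m) = x
        exact ZMod.natCast_rightInverse x



lemma gcd_dvd_gcd_sq (d : ℕ) [NeZero d] (y : ZMod d) :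
    Nat.gcd ((y - 1).val) d ∣ Nat.gcd ((y ^ 2 - 1).val) d := by
  apply Nat.dvd_gcd _ (Nat.gcd_dvd_right _ _)
  have hy : y ^ 2 - 1 = (y - 1) * (y + 1) := by ring
  rw [hy, ZMod.val_mul]
  have h1 : Nat.gcd ((y - 1).val) d ∣ (y - 1).val * (y + 1).val :=
    Dvd.dvd.mul_right (Nat.gcd_dvd_left _ _) _
  exact (Nat.dvd_mod_iff (Nat.gcd_dvd_right _ _)).mpr h1

lemma prod_eq_of_dvd {d1 D1 d2 D2 : ℕ} (h1 : d1 ∣ D1) (h2 : d2 ∣ D2)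
    (hD1 : 0 < D1) (hD2 : 0 < D2) (h : D1 * D2 = d1 * d2) : D1 = d1 ∧ D2 = d2 := by
  have hd1 : 0 < d1 := Nat.pos_of_dvd_of_pos h1 hD1
  have hd2 : 0 < d2 := Nat.pos_of_dvd_of_pos h2 hD2
  have l1 : d1 ≤ D1 := Nat.le_of_dvd hD1 h1
  have l2 : d2 ≤ D2 := Nat.le_of_dvd hD2 h2
  constructor <;> nlinarith

lemma gcd_val_cast_of_dvd (n d : ℕ) [NeZero n] [NeZero d] (hd : d ∣ n) (u : ZMod n) :
    Nat.gcd ((ZMod.castHom hd (ZMod d) u).val) d = Nat.gcd u.val d := by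
  have h : (ZMod.castHom hd (ZMod d)) u = ((u.val : ℕ) : ZMod d) := by
    rw [ZMod.castHom_apply, ← ZMod.natCast_val]
  rw [h, gcd_val_natCast]

lemma card_Qset_mul (a b : ℕ) [NeZero a] [NeZero b] (h : Nat.Coprime a b)
    [NeZero (a * b)] :
    (Qset (a * b)).card = (Qset a).card * (Qset b).card := by
  classical
  have ha : 0 < a := Nat.pos_of_ne_zero (NeZero.ne a)
  have hb : 0 < b := Nat.pos_of_ne_zero (NeZero.ne b)
  set e := ZMod.chineseRemainder h with he
  have hfst : ∀ x : ZMod (a * b),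
      (e x).1 = ZMod.castHom (dvd_mul_right a b) (ZMod a) x := by
    intro x
    have := RingHom.ext_zmod
      ((RingHom.fst (ZMod a) (ZMod b)).comp (e : ZMod (a * b) →+* ZMod a × ZMod b))
      (ZMod.castHom (dvd_mul_right a b) (ZMod a))
    exact RingHom.congr_fun this x
  have hsnd : ∀ x : ZMod (a * b),
      (e x).2 = ZMod.castHom (dvd_mul_left b a) (ZMod b) x := by
    intro x
    have := RingHom.ext_zmod
      ((RingHom.snd (ZMod a) (ZMod b)).comp (e : ZMod (a * b) →+* ZMod a × ZMod b))
      (ZMod.castHom (dvd_mul_left b a) (ZMod b))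
    exact RingHom.congr_fun this x
  have key : ∀ x : ZMod (a * b), Q (a * b) x ↔ (Q a (e x).1 ∧ Q b (e x).2) := by
    intro x
    have g2a : Nat.gcd (((e x).1 ^ 2 - 1).val) a = Nat.gcd ((x ^ 2 - 1).val) a := by
      rw [hfst]
      have hm : (ZMod.castHom (dvd_mul_right a b) (ZMod a)) x ^ 2 - 1
          = (ZMod.castHom (dvd_mul_right a b) (ZMod a)) (x ^ 2 - 1) := by
        rw [map_sub, map_pow, map_one]
      rw [hm, gcd_val_cast_of_dvd]
    have g1a : Nat.gcd (((e x).1 - 1).val) a = Nat.gcd ((x - 1).val) a := by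
      rw [hfst]
      have hm : (ZMod.castHom (dvd_mul_right a b) (ZMod a)) x - 1
          = (ZMod.castHom (dvd_mul_right a b) (ZMod a)) (x - 1) := by
        rw [map_sub, map_one]
      rw [hm, gcd_val_cast_of_dvd]
    have g2b : Nat.gcd (((e x).2 ^ 2 - 1).val) b = Nat.gcd ((x ^ 2 - 1).val) b := by
      rw [hsnd]
      have hm : (ZMod.castHom (dvd_mul_left b a) (ZMod b)) x ^ 2 - 1
          = (ZMod.castHom (dvd_mul_left b a) (ZMod b)) (x ^ 2 - 1) := by
        rw [map_sub, map_pow, map_one]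
      rw [hm, gcd_val_cast_of_dvd]
    have g1b : Nat.gcd (((e x).2 - 1).val) b = Nat.gcd ((x - 1).val) b := by
      rw [hsnd]
      have hm : (ZMod.castHom (dvd_mul_left b a) (ZMod b)) x - 1
          = (ZMod.castHom (dvd_mul_left b a) (ZMod b)) (x - 1) := by
        rw [map_sub, map_one]
      rw [hm, gcd_val_cast_of_dvd]
    have hpow : x ^ 4 = 1 ↔ ((e x).1 ^ 4 = 1 ∧ (e x).2 ^ 4 = 1) := by
      constructor
      · intro hx
        constructor
        · have : (e (x ^ 4)).1 = (e 1).1 := by rw [hx]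
          rwa [map_pow, map_one, Prod.pow_fst, Prod.fst_one] at this
        · have : (e (x ^ 4)).2 = (e 1).2 := by rw [hx]
          rwa [map_pow, map_one, Prod.pow_snd, Prod.snd_one] at this
      · rintro ⟨h1, h2⟩
        apply e.injective
        rw [map_pow, map_one]
        ext
        · rw [Prod.pow_fst, h1, Prod.fst_one]
        · rw [Prod.pow_snd, h2, Prod.snd_one]
    have hdva : Nat.gcd ((x - 1).val) a ∣ Nat.gcd ((x ^ 2 - 1).val) a := by
      rw [← g1a, ← g2a]; exact gcd_dvd_gcd_sq a _
    have hdvb : Nat.gcd ((x - 1).val) b ∣ Nat.gcd ((x ^ 2 - 1).val) b := by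
      rw [← g1b, ← g2b]; exact gcd_dvd_gcd_sq b _
    have hgcd : (Nat.gcd ((x ^ 2 - 1).val) (a * b) = Nat.gcd ((x - 1).val) (a * b))
        ↔ (Nat.gcd ((x ^ 2 - 1).val) a = Nat.gcd ((x - 1).val) a ∧
           Nat.gcd ((x ^ 2 - 1).val) b = Nat.gcd ((x - 1).val) b) := by
      rw [h.gcd_mul, h.gcd_mul]
      constructor
      · intro hh
        exact prod_eq_of_dvd hdva hdvb (Nat.gcd_pos_of_pos_right _ ha)
          (Nat.gcd_pos_of_pos_right _ hb) hh
      · rintro ⟨h1, h2⟩; rw [h1, h2]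
    unfold Q
    rw [hpow, hgcd, g1a, g2a, g1b, g2b]
    tauto
  rw [← Finset.card_product]
  refine Finset.card_bij (fun x _ => e x) ?_ ?_ ?_
  · intro x hx
    simp only [Qset, Finset.mem_filter, Finset.mem_univ, true_and] at hx
    show e x ∈ Qset a ×ˢ Qset b
    rw [Finset.mem_product]
    simp only [Qset, Finset.mem_filter, Finset.mem_univ, true_and]
    exact (key x).mp hx
  · intro x _ y _ hxy
    exact e.injective hxy
  · intro p hp
    refine ⟨e.symm p, ?_, e.apply_symm_apply p⟩
    simp only [Qset, Finset.mem_filter, Finset.mem_univ, true_and]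
    rw [Finset.mem_product] at hp
    simp only [Qset, Finset.mem_filter, Finset.mem_univ, true_and] at hp
    rw [key (e.symm p), e.apply_symm_apply p]
    exact hp



lemma isUnit_gcd_eq_one {n : ℕ} [NeZero n] {u : ZMod n} (hu : IsUnit u) :
    Nat.gcd u.val n = 1 := by
  have h := ZMod.val_coe_unit_coprime hu.unit
  rwa [IsUnit.unit_spec] at h

lemma Q_one (m : ℕ) [NeZero m] : Q m 1 := by
  constructor
  · rw [one_pow]
  · norm_num

lemma two_ne_zero' (n : ℕ) [NeZero n] (h3 : 3 ≤ n) : (2 : ZMod n) ≠ 0 := by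
  intro h
  have h2 : ((2 : ℕ) : ZMod n) = 0 := by exact_mod_cast h
  have hd := (ZMod.natCast_eq_zero_iff 2 n).mp h2
  have := Nat.le_of_dvd (by norm_num) hd
  omega

lemma sq_eq_one_cases (p e : ℕ) (hp : p.Prime) (hodd : p ≠ 2) (he : 0 < e)
    [NeZero (p ^ e)] (y : ZMod (p ^ e)) (h : y ^ 2 = 1) : y = 1 ∨ y = -1 := by
  set t : ℤ := (y.val : ℤ) with ht
  have hy : ((t : ℤ) : ZMod (p ^ e)) = y := by
    rw [ht]
    push_cast
    exact ZMod.natCast_rightInverse y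
  have hd : ((p : ℤ)) ^ e ∣ (t - 1) * (t + 1) := by
    have h0 : (((t - 1) * (t + 1) : ℤ) : ZMod (p ^ e)) = 0 := by
      push_cast [hy]
      linear_combination h
    have h2 := (ZMod.intCast_zmod_eq_zero_iff_dvd _ _).mp h0
    have h3 : ((p ^ e : ℕ) : ℤ) = (p : ℤ) ^ e := by push_cast; ring
    rwa [h3] at h2
  have hpZ : Prime (p : ℤ) := by rw [Int.prime_iff_natAbs_prime]; simpa using hp
  by_cases hc : (p : ℤ) ∣ t + 1
  · have hnd : ¬ (p : ℤ) ∣ t - 1 := by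
      intro hd1
      have hsub : (p : ℤ) ∣ 2 := by
        have h4 := dvd_sub hc hd1
        have : (t + 1) - (t - 1) = 2 := by ring
        rwa [this] at h4
      have h5 : (p : ℕ) ∣ 2 := by exact_mod_cast hsub
      exact hodd ((Nat.prime_dvd_prime_iff_eq hp Nat.prime_two).mp h5)
    have hcop : IsCoprime ((p : ℤ) ^ e) (t - 1) :=
      ((hpZ.coprime_iff_not_dvd).mpr hnd).pow_left
    have hdvd : (p : ℤ) ^ e ∣ t + 1 := by
      rw [mul_comm] at hd
      exact hcop.dvd_of_dvd_mul_right hd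
    right
    have h0 : ((t + 1 : ℤ) : ZMod (p ^ e)) = 0 := by
      rw [ZMod.intCast_zmod_eq_zero_iff_dvd]
      have h3 : ((p ^ e : ℕ) : ℤ) = (p : ℤ) ^ e := by push_cast; ring
      rwa [h3]
    push_cast [hy] at h0
    linear_combination h0
  · have hcop : IsCoprime ((p : ℤ) ^ e) (t + 1) :=
      ((hpZ.coprime_iff_not_dvd).mpr hc).pow_left
    have hdvd : (p : ℤ) ^ e ∣ t - 1 := hcop.dvd_of_dvd_mul_right hd
    left
    have h0 : ((t - 1 : ℤ) : ZMod (p ^ e)) = 0 := by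
      rw [ZMod.intCast_zmod_eq_zero_iff_dvd]
      have h3 : ((p ^ e : ℕ) : ℤ) = (p : ℤ) ^ e := by push_cast; ring
      rwa [h3]
    push_cast [hy] at h0
    linear_combination h0

lemma three_le_pe (p e : ℕ) (hp : p.Prime) (hodd : p ≠ 2) (he : 0 < e) : 3 ≤ p ^ e := by
  have h2 := hp.two_le
  have h3 : 3 ≤ p := by omega
  calc 3 ≤ p := h3
    _ ≤ p ^ e := Nat.le_self_pow he.ne' p

lemma gcd_sub_one_eq_one (p e : ℕ) (hp : p.Prime) (hodd : p ≠ 2) (he : 0 < e)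
    [NeZero (p ^ e)] (x : ZMod (p ^ e)) (hx : x ^ 2 = -1) :
    Nat.gcd ((x - 1).val) (p ^ e) = 1 := by
  have hnd : ¬ p ∣ (x - 1).val := by
    intro hdvd
    set π := ZMod.castHom (dvd_pow_self p he.ne') (ZMod p) with hπ
    have h1 : π (x - 1) = 0 := by
      have hc : π (x - 1) = (((x - 1).val : ℕ) : ZMod p) := by
        rw [hπ, ZMod.castHom_apply, ← ZMod.natCast_val]
      rw [hc]
      exact (ZMod.natCast_eq_zero_iff _ _).mpr hdvd
    have h2 : π x = 1 := by
      have := h1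
      rw [map_sub, map_one, sub_eq_zero] at this
      exact this
    have h3 : (1 : ZMod p) = -1 := by
      have h4 : π (x ^ 2) = π (-1) := by rw [hx]
      rw [map_pow, map_neg, map_one, h2, one_pow] at h4
      exact h4
    have h5 : (2 : ZMod p) = 0 := by linear_combination h3
    haveI : NeZero p := ⟨hp.pos.ne'⟩
    exact two_ne_zero' p (by have := hp.two_le; omega) h5
  have hcop : Nat.Coprime ((x - 1).val) (p ^ e) :=
    (Nat.Coprime.pow_left e ((hp.coprime_iff_not_dvd).mpr hnd)).symm
  exact hcop

lemma sq_neg_one_Q (p e : ℕ) (hp : p.Prime) (hodd : p ≠ 2) (he : 0 < e)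
    [NeZero (p ^ e)] (x : ZMod (p ^ e)) (hx : x ^ 2 = -1) : Q (p ^ e) x := by
  constructor
  · have : x ^ 4 = (x ^ 2) ^ 2 := by ring
    rw [this, hx]
    ring
  · have h1 : x ^ 2 - 1 = -2 := by rw [hx]; ring
    rw [h1, gcd_sub_one_eq_one p e hp hodd he x hx]
    apply isUnit_gcd_eq_one
    have h2 : IsUnit (2 : ZMod (p ^ e)) := by
      have hc : Nat.Coprime 2 (p ^ e) := by
        apply Nat.Coprime.pow_right
        exact (Nat.Prime.coprime_iff_not_dvd Nat.prime_two).mpr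
          (fun hd => hodd ((Nat.prime_dvd_prime_iff_eq Nat.prime_two hp).mp hd).symm)
      have := (ZMod.isUnit_iff_coprime 2 (p ^ e)).mpr hc
      simpa using this
    simpa using h2.neg

lemma Q_imp (p e : ℕ) (hp : p.Prime) (hodd : p ≠ 2) (he : 0 < e)
    [NeZero (p ^ e)] (x : ZMod (p ^ e)) (hQ : Q (p ^ e) x) : x = 1 ∨ x ^ 2 = -1 := by
  obtain ⟨h4, hg⟩ := hQ
  have hsq : (x ^ 2) ^ 2 = 1 := by
    have : (x ^ 2) ^ 2 = x ^ 4 := by ring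
    rw [this, h4]
  rcases sq_eq_one_cases p e hp hodd he (x ^ 2) hsq with h1 | h1
  · rcases sq_eq_one_cases p e hp hodd he x h1 with h2 | h2
    · exact Or.inl h2
    · exfalso
      have e1 : x ^ 2 - 1 = 0 := by rw [h1]; ring
      have e2 : x - 1 = -2 := by rw [h2]; ring
      rw [e1, e2] at hg
      rw [ZMod.val_zero, Nat.gcd_zero_left] at hg
      -- hg : p ^ e = gcd ((-2).val) (p^e)
      have hu : Nat.gcd ((-2 : ZMod (p ^ e)).val) (p ^ e) = 1 := by
        apply isUnit_gcd_eq_one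
        have h2' : IsUnit (2 : ZMod (p ^ e)) := by
          have hc : Nat.Coprime 2 (p ^ e) := by
            apply Nat.Coprime.pow_right
            exact (Nat.Prime.coprime_iff_not_dvd Nat.prime_two).mpr
              (fun hd => hodd ((Nat.prime_dvd_prime_iff_eq Nat.prime_two hp).mp hd).symm)
          have := (ZMod.isUnit_iff_coprime 2 (p ^ e)).mpr hc
          simpa using this
        simpa using h2'.neg
      rw [hu] at hg
      have := three_le_pe p e hp hodd he
      omega
  · exact Or.inr h1

lemma hensel (p : ℕ) (hp : p.Prime) (hp4 : p % 4 = 1) :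
    ∀ e : ℕ, ∃ t : ℤ, (p : ℤ) ^ (e + 1) ∣ t ^ 2 + 1 := by
  haveI : Fact p.Prime := ⟨hp⟩
  have hodd : p ≠ 2 := by omega
  have hp3 : 3 ≤ p := by have := hp.two_le; omega
  intro e
  induction e with
  | zero =>
    have hs : IsSquare (-1 : ZMod p) := ZMod.exists_sq_eq_neg_one_iff.mpr (by omega)
    obtain ⟨z, hz⟩ := hs
    refine ⟨(z.val : ℤ), ?_⟩
    have hz2 : (((z.val : ℤ) ^ 2 + 1 : ℤ) : ZMod p) = 0 := by
      push_cast
      have hv : ((z.val : ℕ) : ZMod p) = z := ZMod.natCast_rightInverse z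
      rw [hv]
      rw [sq]
      rw [← hz]
      ring
    rw [pow_one]
    have := (ZMod.intCast_zmod_eq_zero_iff_dvd _ p).mp hz2
    exact_mod_cast this
  | succ e ih =>
    obtain ⟨t, ht⟩ := ih
    obtain ⟨c, hc⟩ := ht
    have htbar : ((t : ZMod p)) ^ 2 = -1 := by
      have hdp : (p : ℤ) ∣ t ^ 2 + 1 := by
        refine dvd_trans ?_ ⟨c, hc⟩
        exact dvd_pow_self _ (Nat.succ_ne_zero e)
      have h0 : ((t ^ 2 + 1 : ℤ) : ZMod p) = 0 := by
        rw [ZMod.intCast_zmod_eq_zero_iff_dvd]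
        exact_mod_cast hdp
      push_cast at h0
      linear_combination h0
    have ht0 : (t : ZMod p) ≠ 0 := by
      intro h
      rw [h] at htbar
      have h1 : (1 : ZMod p) = 0 := by linear_combination htbar
      exact one_ne_zero h1
    have h2 : (2 : ZMod p) ≠ 0 := two_ne_zero' p hp3
    have h2t : (2 * (t : ZMod p)) ≠ 0 := mul_ne_zero h2 ht0
    set sbar : ZMod p := - (c : ZMod p) * (2 * (t : ZMod p))⁻¹ with hsbar
    set s : ℤ := (sbar.val : ℤ) with hs
    refine ⟨t + s * (p : ℤ) ^ (e + 1), ?_⟩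
    have key : (t + s * (p : ℤ) ^ (e + 1)) ^ 2 + 1
        = (p : ℤ) ^ (e + 1) * (c + 2 * t * s + s ^ 2 * (p : ℤ) ^ (e + 1)) := by
      linear_combination hc
    rw [key, pow_succ]
    apply mul_dvd_mul_left
    have hcast : ((c + 2 * t * s + s ^ 2 * (p : ℤ) ^ (e + 1) : ℤ) : ZMod p) = 0 := by
      push_cast
      have hsval : ((s : ℤ) : ZMod p) = sbar := by
        rw [hs]
        push_cast
        exact ZMod.natCast_rightInverse sbar
      rw [hsval, ZMod.natCast_self]
      rw [zero_pow (Nat.succ_ne_zero e)]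
      have hinv : (2 * (t : ZMod p)) * (2 * (t : ZMod p))⁻¹ = 1 := mul_inv_cancel₀ h2t
      rw [hsbar]
      ring_nf
      ring_nf at hinv
      linear_combination (-(c : ZMod p)) * hinv
    have := (ZMod.intCast_zmod_eq_zero_iff_dvd _ p).mp hcast
    exact_mod_cast this

lemma exists_sq_neg_one (p e : ℕ) (hp : p.Prime) (hp4 : p % 4 = 1) (he : 0 < e)
    [NeZero (p ^ e)] : ∃ x : ZMod (p ^ e), x ^ 2 = -1 := by
  obtain ⟨t, ht⟩ := hensel p hp hp4 (e - 1)
  have he' : e - 1 + 1 = e := by omega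
  rw [he'] at ht
  refine ⟨(t : ZMod (p ^ e)), ?_⟩
  have h0 : ((t ^ 2 + 1 : ℤ) : ZMod (p ^ e)) = 0 := by
    rw [ZMod.intCast_zmod_eq_zero_iff_dvd]
    exact_mod_cast ht
  push_cast at h0
  linear_combination h0


end Stmt17

namespace Stmt17

lemma Qset_odd (p e : ℕ) (hp : p.Prime) (hodd : p ≠ 2) (he : 0 < e) [NeZero (p ^ e)] :
    Qset (p ^ e) = insert 1 (Finset.univ.filter (fun x : ZMod (p ^ e) => x ^ 2 = -1)) := by
  ext x
  simp only [Qset, Finset.mem_filter, Finset.mem_univ, true_and, Finset.mem_insert]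
  constructor
  · intro hQ
    exact Q_imp p e hp hodd he x hQ
  · rintro (rfl | hx)
    · exact Q_one _
    · exact sq_neg_one_Q p e hp hodd he x hx

lemma card_Qset_odd (p e : ℕ) (hp : p.Prime) (hodd : p ≠ 2) (he : 0 < e) [NeZero (p ^ e)] :
    (Qset (p ^ e)).card = if p % 4 = 1 then 3 else 1 := by
  have h3 := three_le_pe p e hp hodd he
  rw [Qset_odd p e hp hodd he]
  by_cases h4 : p % 4 = 1
  · rw [if_pos h4]
    obtain ⟨x₀, hx₀⟩ := exists_sq_neg_one p e hp h4 he
    have hset : Finset.univ.filter (fun x : ZMod (p ^ e) => x ^ 2 = -1) = {x₀, -x₀} := by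
      ext y
      simp only [Finset.mem_filter, Finset.mem_univ, true_and, Finset.mem_insert,
        Finset.mem_singleton]
      constructor
      · intro hy
        have hinv : x₀ * -x₀ = 1 := by linear_combination -hx₀
        have hsq : (y * x₀) ^ 2 = 1 := by rw [mul_pow, hy, hx₀]; ring
        rcases sq_eq_one_cases p e hp hodd he (y * x₀) hsq with h | h
        · right
          calc y = y * (x₀ * -x₀) := by rw [hinv, mul_one]
            _ = (y * x₀) * -x₀ := by ring
            _ = -x₀ := by rw [h, one_mul]
        · left
          calc y = y * (x₀ * -x₀) := by rw [hinv, mul_one]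
            _ = (y * x₀) * -x₀ := by ring
            _ = x₀ := by rw [h]; ring
      · rintro (rfl | rfl)
        · exact hx₀
        · rw [neg_sq]; exact hx₀
    rw [hset]
    have hne : x₀ ≠ -x₀ := by
      intro h
      have h2 : (2 : ZMod (p ^ e)) * (x₀ * x₀) = 0 := by linear_combination x₀ * h
      have h3' : x₀ * x₀ = -1 := by rw [← sq]; exact hx₀
      rw [h3'] at h2
      have h5 : (2 : ZMod (p ^ e)) = 0 := by linear_combination -h2
      exact absurd h5 (two_ne_zero' _ h3)
    have h1n : (1 : ZMod (p ^ e)) ∉ ({x₀, -x₀} : Finset (ZMod (p ^ e))) := by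
      simp only [Finset.mem_insert, Finset.mem_singleton]
      rintro (h | h)
      · rw [← h] at hx₀
        have h5 : (2 : ZMod (p ^ e)) = 0 := by linear_combination hx₀
        exact absurd h5 (two_ne_zero' _ h3)
      · have h6 : x₀ = -1 := by rw [h]; ring
        rw [h6] at hx₀
        have h5 : (2 : ZMod (p ^ e)) = 0 := by linear_combination hx₀
        exact absurd h5 (two_ne_zero' _ h3)
    rw [Finset.card_insert_of_notMem h1n, Finset.card_pair hne]
  · rw [if_neg h4]
    have hempty : Finset.univ.filter (fun x : ZMod (p ^ e) => x ^ 2 = -1) = ∅ := by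
      ext y
      simp only [Finset.mem_filter, Finset.mem_univ, true_and, Finset.notMem_empty,
        iff_false]
      intro hy
      haveI : Fact p.Prime := ⟨hp⟩
      set π := ZMod.castHom (dvd_pow_self p he.ne') (ZMod p) with hπ
      have h1 : (π y) ^ 2 = -1 := by
        rw [← map_pow, hy, map_neg, map_one]
      have hs : IsSquare (-1 : ZMod p) := ⟨π y, by rw [← h1]; ring⟩
      have h43 := ZMod.exists_sq_eq_neg_one_iff.mp hs
      have hodd2 : p % 2 = 1 := Nat.odd_iff.mp (hp.odd_of_ne_two hodd)
      omega
    rw [hempty]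
    simp

lemma card_Qset_two_pow (e : ℕ) (he : 0 < e) [NeZero (2 ^ e)] :
    (Qset (2 ^ e)).card = 1 := by
  have hn2 : 2 ≤ 2 ^ e := by
    calc 2 = 2 ^ 1 := rfl
      _ ≤ 2 ^ e := Nat.pow_le_pow_right (by norm_num) he
  haveI : Fact (1 < 2 ^ e) := ⟨hn2⟩
  have hset : Qset (2 ^ e) = {1} := by
    ext x
    simp only [Qset, Finset.mem_filter, Finset.mem_univ, true_and, Finset.mem_singleton]
    constructor
    · rintro ⟨h4, hg⟩
      by_contra hx1
      have hu : IsUnit x := by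
        apply IsUnit.of_mul_eq_one (x ^ 3)
        have h1 : x * x ^ 3 = x ^ 4 := by ring
        rw [h1, h4]
      have h2n : 2 ∣ 2 ^ e := dvd_pow_self 2 he.ne'
      have hvodd : x.val % 2 = 1 := by
        have hcop := isUnit_gcd_eq_one hu
        rcases Nat.even_or_odd x.val with hev | hod
        · exfalso
          have h2d : 2 ∣ Nat.gcd x.val (2 ^ e) := Nat.dvd_gcd hev.two_dvd h2n
          omega
        · exact Nat.odd_iff.mp hod
      set w := (x - 1).val with hw
      set u := (x + 1).val with hu'
      have hw0 : w ≠ 0 := by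
        intro h
        apply hx1
        have h1 := (ZMod.val_eq_zero _).mp h
        exact sub_eq_zero.mp h1
      have hwlt : w < 2 ^ e := ZMod.val_lt _
      have hxw : x.val = (w + 1) % 2 ^ e := by
        have hx' : x = (x - 1) + 1 := by ring
        conv_lhs => rw [hx']
        rw [ZMod.val_add, ZMod.val_one]
      have hweven : w % 2 = 0 := by
        have h1 : x.val % 2 = (w + 1) % 2 := by
          rw [hxw, Nat.mod_mod_of_dvd _ h2n]
        omega
      have hueven : u % 2 = 0 := by
        have h1 : u = (x.val + 1) % 2 ^ e := by rw [hu', ZMod.val_add, ZMod.val_one]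
        have h2 : u % 2 = (x.val + 1) % 2 := by rw [h1, Nat.mod_mod_of_dvd _ h2n]
        omega
      have hv : (x ^ 2 - 1).val = (w * u) % 2 ^ e := by
        have h1 : x ^ 2 - 1 = (x - 1) * (x + 1) := by ring
        rw [h1, ZMod.val_mul]
      set g := Nat.gcd w (2 ^ e) with hg'
      have hgpos : 0 < g := Nat.gcd_pos_of_pos_right _ (by positivity)
      have hgw : g ∣ w := Nat.gcd_dvd_left _ _
      have hgn : g ∣ 2 ^ e := Nat.gcd_dvd_right _ _
      have hglt : g < 2 ^ e :=
        lt_of_le_of_lt (Nat.le_of_dvd (Nat.pos_of_ne_zero hw0) hgw) hwlt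
      obtain ⟨k, hk, hgk⟩ := (Nat.dvd_prime_pow Nat.prime_two).mp hgn
      have hkl : k < e := by
        rcases eq_or_lt_of_le hk with h | h
        · exfalso
          rw [h] at hgk
          exact (ne_of_lt hglt) hgk
        · exact h
      have h2g : 2 * g ∣ 2 ^ e := by
        rw [hgk]
        have h1 : 2 * 2 ^ k = 2 ^ (k + 1) := by ring
        rw [h1]
        exact pow_dvd_pow 2 (by omega)
      have h2gv : 2 * g ∣ (x ^ 2 - 1).val := by
        rw [hv]
        apply (Nat.dvd_mod_iff h2g).mpr
        have h1 : g * 2 ∣ w * u :=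
          mul_dvd_mul hgw (Nat.dvd_of_mod_eq_zero hueven)
        rwa [mul_comm] at h1
      have hfin : 2 * g ∣ g := by
        have h1 : 2 * g ∣ Nat.gcd ((x ^ 2 - 1).val) (2 ^ e) := Nat.dvd_gcd h2gv h2g
        rwa [hg] at h1
      have := Nat.le_of_dvd hgpos hfin
      omega
    · rintro rfl
      exact Q_one _
  rw [hset, Finset.card_singleton]

lemma card_Qset_prime_pow (p e : ℕ) (hp : p.Prime) (he : 0 < e) [NeZero (p ^ e)] :
    (Qset (p ^ e)).card = if p % 4 = 1 then 3 else 1 := by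
  by_cases h2 : p = 2
  · subst h2
    rw [if_neg (by norm_num)]
    exact card_Qset_two_pow e he
  · exact card_Qset_odd p e hp h2 he

lemma cnt_eq_pow : ∀ m : ℕ, 0 < m → cnt m = 3 ^ rr m := by
  intro m
  induction m using Nat.recOnPosPrimePosCoprime with
  | prime_pow p n hp hn =>
    intro _
    have hp' : p.Prime := hp
    haveI : NeZero (p ^ n) := ⟨pow_ne_zero n hp'.pos.ne'⟩
    rw [cnt_eq_card_Qset, card_Qset_prime_pow p n hp' hn]
    rw [rr, Nat.primeFactors_prime_pow hn.ne' hp']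
    by_cases h4 : p % 4 = 1
    · rw [if_pos h4, Finset.filter_singleton, if_pos h4, Finset.card_singleton, pow_one]
    · rw [if_neg h4, Finset.filter_singleton, if_neg h4, Finset.card_empty, pow_zero]
  | zero =>
    intro h
    exact absurd h (lt_irrefl 0)
  | one =>
    intro _
    have h1 : cnt 1 = 1 := by decide
    rw [h1, rr, Nat.primeFactors_one]
    simp
  | coprime a b ha hb hab iha ihb =>
    intro _
    haveI : NeZero a := ⟨by omega⟩
    haveI : NeZero b := ⟨by omega⟩
    haveI : NeZero (a * b) := ⟨mul_ne_zero (by omega) (by omega)⟩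
    rw [cnt_eq_card_Qset, card_Qset_mul a b hab, ← cnt_eq_card_Qset, ← cnt_eq_card_Qset,
      iha (by omega), ihb (by omega), ← pow_add]
    congr 1
    rw [rr, rr, rr, Nat.primeFactors_mul (by omega) (by omega), Finset.filter_union,
      Finset.card_union_of_disjoint]
    exact Finset.disjoint_filter_filter (hab.disjoint_primeFactors)

end Stmt17

/-- Proposition 3.15: the total number of Rédei permutations with 1- and
4-cycles for a fixed parameter a. -/
theorem stmt_17 (q : ℕ) (hq : ∃ p' j : ℕ, p'.Prime ∧ Odd p' ∧ 0 < j ∧ q = p' ^ j)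
    (χ : ℤ) (hχ : χ = 1 ∨ χ = -1) (m : ℕ) (hm : (m : ℤ) = (q : ℤ) - χ)
    (r : ℕ) (hr : r = (m.primeFactors.filter (fun ℓ => ℓ % 4 = 1)).card) :
    ((Finset.Icc 2 m).filter
      (fun n => m ∣ n ^ 4 - 1 ∧ Nat.gcd (n ^ 2 - 1) m = Nat.gcd (n - 1) m)).card =
      3 ^ r - 1 := by
  obtain ⟨p', j, hp', hodd', hj, hqe⟩ := hq
  have hp3 : 3 ≤ p' := by
    have h2 := hp'.two_le
    have := Nat.odd_iff.mp hodd'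
    omega
  have hq3 : 3 ≤ q := by
    rw [hqe]
    calc 3 ≤ p' := hp3
      _ ≤ p' ^ j := Nat.le_self_pow hj.ne' p'
  have hm2 : 2 ≤ m := by
    have hq3' : (3 : ℤ) ≤ (q : ℤ) := by exact_mod_cast hq3
    have h2m : (2 : ℤ) ≤ (m : ℤ) := by rcases hχ with rfl | rfl <;> omega
    exact_mod_cast h2m
  haveI : NeZero m := ⟨by omega⟩
  have hsplit : Finset.Icc 1 m = insert 1 (Finset.Icc 2 m) := by
    ext x
    simp only [Finset.mem_Icc, Finset.mem_insert]
    omega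
  have h1c : (m ∣ 1 ^ 4 - 1 ∧ Nat.gcd (1 ^ 2 - 1) m = Nat.gcd (1 - 1) m) := by
    norm_num
  have h1nm : (1 : ℕ) ∉ (Finset.Icc 2 m).filter
      (fun n => m ∣ n ^ 4 - 1 ∧ Nat.gcd (n ^ 2 - 1) m = Nat.gcd (n - 1) m) := by
    intro hmem
    have := Finset.mem_of_mem_filter _ hmem
    simp only [Finset.mem_Icc] at this
    omega
  have hcnt : Stmt17.cnt m = ((Finset.Icc 2 m).filter
      (fun n => m ∣ n ^ 4 - 1 ∧ Nat.gcd (n ^ 2 - 1) m = Nat.gcd (n - 1) m)).card + 1 := by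
    rw [Stmt17.cnt, hsplit, Finset.filter_insert, if_pos h1c,
      Finset.card_insert_of_notMem h1nm]
  have hpow := Stmt17.cnt_eq_pow m (by omega)
  rw [hr]
  rw [show (m.primeFactors.filter (fun ℓ => ℓ % 4 = 1)).card = Stmt17.rr m from rfl]
  omega
end

section
/- Let d be a proper divisor of m and let n be a positive integer such that m divides n³ − 1 and gcd(n − 1, m) = d. Then m divides (n²)³ − 1 and gcd(n² − 1, m) = d. -/
/-- Corollary 4.3: if R_{n,a} has d + χ + 1 fixed points and 3-cycles, then
so does R_{n²,a}. -/
theorem stmt_19 (q : ℕ) (hq : ∃ p j : ℕ, p.Prime ∧ Odd p ∧ 0 < j ∧ q = p ^ j)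
    (χ : ℤ) (hχ : χ = 1 ∨ χ = -1) (m : ℕ) (hm : (m : ℤ) = (q : ℤ) - χ)
    (d : ℕ) (hdm : d ∣ m) (hdne : d ≠ m)
    (n : ℕ) (hn : 0 < n) (hdvd : m ∣ n ^ 3 - 1) (hgcd : Nat.gcd (n - 1) m = d) :
    m ∣ (n ^ 2) ^ 3 - 1 ∧ Nat.gcd (n ^ 2 - 1) m = d := by
  have hn3 : 1 ≤ n ^ 3 := Nat.one_le_pow _ _ hn
  have hn2 : 1 ≤ n ^ 2 := Nat.one_le_pow _ _ hn
  obtain ⟨k, hk⟩ := hdvd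
  have hk' : n ^ 3 = m * k + 1 := by omega
  constructor
  · refine ⟨k * (m * k) + 2 * k, ?_⟩
    have h6 : (n ^ 2) ^ 3 = (m * k + 1) ^ 2 := by
      rw [show (n ^ 2) ^ 3 = (n ^ 3) ^ 2 from by ring, hk']
    have h7 : (m * k + 1) ^ 2 = m * (k * (m * k) + 2 * k) + 1 := by ring
    omega
  · refine Nat.dvd_antisymm ?_ ?_
    · rw [← hgcd]
      refine Nat.dvd_gcd ?_ (Nat.gcd_dvd_right _ _)
      set g := Nat.gcd (n ^ 2 - 1) m with hg
      have hg2 : (g : ℤ) ∣ (n : ℤ) ^ 2 - 1 := by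
        have h := Int.natCast_dvd_natCast.mpr (Nat.gcd_dvd_left (n ^ 2 - 1) m)
        rwa [Nat.cast_sub hn2, Nat.cast_pow, Nat.cast_one] at h
      have hg3 : (g : ℤ) ∣ (n : ℤ) ^ 3 - 1 := by
        have h := Int.natCast_dvd_natCast.mpr
          ((Nat.gcd_dvd_right (n ^ 2 - 1) m).trans ⟨k, hk⟩)
        rwa [Nat.cast_sub hn3, Nat.cast_pow, Nat.cast_one] at h
      have hgd : (g : ℤ) ∣ (n : ℤ) - 1 := by
        have h := dvd_sub hg3 (hg2.mul_left (n : ℤ))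
        have e : (n : ℤ) ^ 3 - 1 - (n : ℤ) * ((n : ℤ) ^ 2 - 1) = (n : ℤ) - 1 := by
          ring
        rwa [e] at h
      rwa [← Nat.cast_one, ← Nat.cast_sub hn, Int.natCast_dvd_natCast] at hgd
    · rw [← hgcd]
      refine Nat.dvd_gcd ?_ (Nat.gcd_dvd_right _ _)
      refine (Nat.gcd_dvd_left (n - 1) m).trans ⟨n + 1, ?_⟩
      obtain ⟨k', rfl⟩ : ∃ k', n = k' + 1 := ⟨n - 1, by omega⟩
      have h : (k' + 1) ^ 2 = k' * (k' + 1 + 1) + 1 := by ring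
      simp only [Nat.add_sub_cancel]
      omega
end
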